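/- arXiv:1601.02792 — 2 statements merged into one kernel-verified Lean document; each statement's English description precedes it below -/
import Mathlib

section
/- Let A, B, C be disjoint finite sets. Let X_{AB} be a simplicial complex on A ∪ B with Stanley–Reisner ideal I_{AB}, and X_{BC} a simplicial complex on B ∪ C with Stanley–Reisner ideal I_{BC}; assume no minimal generator of I_{AB} is divisible by a product x_{b_1} x_{b_2} with b_1, b_2 ∈ B, and similarly for I_{BC}. Let X be the simplicial complex on A ∪ B ∪ C whose Stanley–Reisner ideal is generated by: all generators x_𝐚 of I_{AB} with support 𝐚 ⊆ A; all generators x_𝐜 of I_{BC} with support 𝐜 ⊆ C; and all monomials x_𝐚 x_b x_𝐜 with b ∈ B such that x_𝐚 x_b ∈ I_{AB} and x_b x_𝐜 ∈ I_{BC}. Let B′ and B″ be two disjoint copies of B, and let X_{AB′} on A ∪ B′ and X_{B″C} on B″ ∪ C be the corresponding copies of X_{AB} and X_{BC}. Then the join X_{AB′} * X_{B″C} is homotopy equivalent to X. -/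
/-!
Common infrastructure: abstract simplicial complexes, geometric realization,
homotopy equivalence, reduced simplicial cohomology, squarefree monomial ideals
(encoded as upward closed families of finite sets), Koszul-complex multigraded
Betti numbers, and letterplace ideals of posets.
-/

noncomputable section

open Finset

attribute [local instance] Classical.propDecidable

universe u v w

/-- An abstract simplicial complex on the vertex type `V`: a collection of
finite subsets of `V` (the faces) closed under taking subsets. -/
structure SComplex (V : Type u) where
  faces : Set (Finset V)
  down_closed : ∀ {F G : Finset V}, F ∈ faces → G ⊆ F → G ∈ faces

namespace SComplex

/-- The geometric realization of a simplicial complex: the subspace of `V → ℝ`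
consisting of the convex weight functions supported on a face. -/
def realization {V : Type u} [Fintype V] (X : SComplex V) : Set (V → ℝ) :=
  {f | (∀ v, 0 ≤ f v) ∧ (∑ v, f v) = 1 ∧ ∃ F ∈ X.faces, ∀ v, f v ≠ 0 → v ∈ F}

/-- Two simplicial complexes are homotopy equivalent if their geometric
realizations are homotopy equivalent topological spaces. -/
def HEquiv {V : Type u} {W : Type v} [Fintype V] [Fintype W]
    (X : SComplex V) (Y : SComplex W) : Prop :=
  Nonempty (ContinuousMap.HomotopyEquiv X.realization Y.realization)

/-- Isomorphism ("equality up to relabeling of vertices") of simplicial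
complexes: an order isomorphism between the face posets. -/
def IsIsomorphic {V : Type u} {W : Type v} (X : SComplex V) (Y : SComplex W) : Prop :=
  Nonempty ({F : Finset V // F ∈ X.faces} ≃o {G : Finset W // G ∈ Y.faces})

/-- The induced subcomplex on a subset `S` of the vertex set. -/
def restrict {V : Type u} (X : SComplex V) (S : Set V) : SComplex V where
  faces := {F | F ∈ X.faces ∧ ∀ v ∈ F, v ∈ S}
  down_closed := by
    intro F G hF hGF
    exact ⟨X.down_closed hF.1 hGF, fun v hv => hF.2 v (hGF hv)⟩

/-- The join of two simplicial complexes (on the disjoint union of the two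
vertex types). -/
def join {V : Type u} {W : Type v} (X : SComplex V) (Y : SComplex W) :
    SComplex (V ⊕ W) where
  faces := {F | F.preimage Sum.inl Sum.inl_injective.injOn ∈ X.faces ∧
                F.preimage Sum.inr Sum.inr_injective.injOn ∈ Y.faces}
  down_closed := by
    intro F G hF hGF
    constructor
    · exact X.down_closed hF.1 fun x hx => by
        simp only [Finset.mem_preimage] at hx ⊢
        exact hGF hx
    · exact Y.down_closed hF.2 fun x hx => by
        simp only [Finset.mem_preimage] at hx ⊢
        exact hGF hx

/-- The join of a finite family of simplicial complexes on pairwise disjoint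
vertex types. -/
def bigJoin {ι : Type u} {V : ι → Type v} (X : ∀ i, SComplex (V i)) :
    SComplex (Σ i, V i) where
  faces := {F | ∀ i, F.preimage (Sigma.mk i) sigma_mk_injective.injOn ∈ (X i).faces}
  down_closed := by
    intro F G hF hGF i
    exact (X i).down_closed (hF i) fun x hx => by
      simp only [Finset.mem_preimage] at hx ⊢
      exact hGF hx

/-- The simplicial complex consisting of two disjoint points. -/
def twoPoint : SComplex Bool where
  faces := {F | F.card ≤ 1}
  down_closed := by
    intro F G hF hGF
    exact le_trans (Finset.card_le_card hGF) hF

/-- The suspension of a simplicial complex: its join with two points. -/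
def suspension {V : Type u} (X : SComplex V) : SComplex (V ⊕ Bool) :=
  join X twoPoint

/-- Vertex type of the `m`-fold iterated suspension. -/
def SuspType (V : Type u) : ℕ → Type u
  | 0 => V
  | m + 1 => SuspType V m ⊕ Bool

/-- The `m`-fold iterated suspension of a simplicial complex. -/
def iterSusp {V : Type u} (X : SComplex V) : (m : ℕ) → SComplex (SuspType V m)
  | 0 => X
  | m + 1 => suspension (iterSusp X m)

end SComplex

/-- Position of `x` with respect to a finite set: the number of elements of `F`
preceding `x` in a fixed well-ordering of the vertex type.  Used for the signs
in (co)chain complexes. -/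
def vpos {V : Type u} (F : Finset V) (x : V) : ℕ :=
  (F.filter fun w => WellOrderingRel w x).card

namespace SComplex

variable (k : Type w) [Field k]

/-- The faces of dimension `i` (i.e. of cardinality `i + 1`), `i ∈ ℤ`. -/
abbrev Face {V : Type u} (X : SComplex V) (i : ℤ) : Type u :=
  {F : Finset V // F ∈ X.faces ∧ (F.card : ℤ) = i + 1}

/-- Reduced simplicial `i`-cochains of `X` with coefficients in `k`
(the empty face in dimension `-1` is included). -/
abbrev cochain {V : Type u} (X : SComplex V) (i : ℤ) : Type (max u w) :=
  Face X i → k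

/-- Evaluation of a cochain on an arbitrary finite set (zero if the set is not
a face of the appropriate dimension). -/
def evalC {V : Type u} {X : SComplex V} {i : ℤ} (f : cochain k X i) (F : Finset V) : k :=
  if h : F ∈ X.faces ∧ (F.card : ℤ) = i + 1 then f ⟨F, h⟩ else 0

theorem evalC_add {V : Type u} {X : SComplex V} {i : ℤ} (f g : cochain k X i)
    (F : Finset V) : evalC k (f + g) F = evalC k f F + evalC k g F := by
  unfold evalC
  split_ifs <;> simp

theorem evalC_smul {V : Type u} {X : SComplex V} {i : ℤ} (s : k) (f : cochain k X i)
    (F : Finset V) : evalC k (s • f) F = s * evalC k f F := by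
  unfold evalC
  split_ifs <;> simp

/-- The simplicial coboundary map on reduced cochains. -/
def coboundary {V : Type u} (X : SComplex V) (i : ℤ) :
    cochain k X i →ₗ[k] cochain k X (i + 1) where
  toFun f F := ∑ v ∈ F.1, ((-1 : k) ^ vpos F.1 v) * evalC k f (F.1.erase v)
  map_add' f g := by
    funext F
    show (∑ v ∈ F.1, ((-1 : k) ^ vpos F.1 v) * evalC k (f + g) (F.1.erase v))
      = (∑ v ∈ F.1, ((-1 : k) ^ vpos F.1 v) * evalC k f (F.1.erase v))
      + (∑ v ∈ F.1, ((-1 : k) ^ vpos F.1 v) * evalC k g (F.1.erase v))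
    rw [← Finset.sum_add_distrib]
    exact Finset.sum_congr rfl fun v _ => by rw [evalC_add, mul_add]
  map_smul' s f := by
    funext F
    show (∑ v ∈ F.1, ((-1 : k) ^ vpos F.1 v) * evalC k (s • f) (F.1.erase v))
      = s * ∑ v ∈ F.1, ((-1 : k) ^ vpos F.1 v) * evalC k f (F.1.erase v)
    rw [Finset.mul_sum]
    exact Finset.sum_congr rfl fun v _ => by rw [evalC_smul]; ring

/-- The dimension of the `i`-th reduced simplicial cohomology of `X` with
coefficients in the field `k` (computed as `dim ker d^i - dim im d^(i-1)`). -/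
def redCohomDim {V : Type u} (X : SComplex V) (i : ℤ) : ℕ :=
  Module.finrank k (LinearMap.ker (coboundary k X i)) -
    Module.finrank k (LinearMap.range (coboundary k X (i - 1)))

/-- The generating series `t·H̃(X,t) = ∑_{i ≥ -1} t^{i+1} dim_k H̃^i(X;k)`,
an element of `ℕ⟦t⟧`. -/
def hSeries {V : Type u} (X : SComplex V) : PowerSeries ℕ :=
  PowerSeries.mk fun m => redCohomDim k X ((m : ℤ) - 1)

end SComplex

/-- A squarefree monomial ideal on the set of variables `W`, encoded by the
upward closed family of the supports of the squarefree monomials belonging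
to it. -/
structure SqfIdeal (W : Type u) where
  carrier : Set (Finset W)
  up_closed : ∀ {S T : Finset W}, S ∈ carrier → S ⊆ T → T ∈ carrier

namespace SqfIdeal

/-- The basis of the degree-`R` strand of the Koszul complex `K(x;I)` in
homological degree `i`. -/
abbrev KBasis {W : Type u} (I : SqfIdeal W) (R : Finset W) (i : ℤ) : Type u :=
  {S : Finset W // S ⊆ R ∧ (S.card : ℤ) = i ∧ R \ S ∈ I.carrier}

/-- The degree-`R` strand of the Koszul complex of `I`, in homological
degree `i`, with coefficients in `k`. -/
abbrev kchain (k : Type w) [Field k] {W : Type u} (I : SqfIdeal W) (R : Finset W)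
    (i : ℤ) : Type (max u w) :=
  KBasis I R i → k

variable (k : Type w) [Field k]

/-- Evaluation of a Koszul chain on an arbitrary finite set. -/
def evalK {W : Type u} {I : SqfIdeal W} {R : Finset W} {i : ℤ}
    (f : kchain k I R i) (S : Finset W) : k :=
  if h : S ⊆ R ∧ (S.card : ℤ) = i ∧ R \ S ∈ I.carrier then f ⟨S, h⟩ else 0

theorem evalK_add {W : Type u} {I : SqfIdeal W} {R : Finset W} {i : ℤ}
    (f g : kchain k I R i) (S : Finset W) :
    evalK k (f + g) S = evalK k f S + evalK k g S := by
  unfold evalK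
  split_ifs <;> simp

theorem evalK_smul {W : Type u} {I : SqfIdeal W} {R : Finset W} {i : ℤ}
    (s : k) (f : kchain k I R i) (S : Finset W) :
    evalK k (s • f) S = s * evalK k f S := by
  unfold evalK
  split_ifs <;> simp

/-- The Koszul differential on the degree-`R` strand (as a map of the dual
function spaces). -/
def koszulD {W : Type u} (I : SqfIdeal W) (R : Finset W) (i : ℤ) :
    kchain k I R i →ₗ[k] kchain k I R (i - 1) where
  toFun f S := ∑ v ∈ R \ S.1, ((-1 : k) ^ vpos S.1 v) * evalK k f (insert v S.1)
  map_add' f g := by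
    funext S
    show (∑ v ∈ R \ S.1, ((-1 : k) ^ vpos S.1 v) * evalK k (f + g) (insert v S.1))
      = (∑ v ∈ R \ S.1, ((-1 : k) ^ vpos S.1 v) * evalK k f (insert v S.1))
      + (∑ v ∈ R \ S.1, ((-1 : k) ^ vpos S.1 v) * evalK k g (insert v S.1))
    rw [← Finset.sum_add_distrib]
    exact Finset.sum_congr rfl fun v _ => by rw [evalK_add, mul_add]
  map_smul' s f := by
    funext S
    show (∑ v ∈ R \ S.1, ((-1 : k) ^ vpos S.1 v) * evalK k (s • f) (insert v S.1))
      = s * ∑ v ∈ R \ S.1, ((-1 : k) ^ vpos S.1 v) * evalK k f (insert v S.1)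
    rw [Finset.mul_sum]
    exact Finset.sum_congr rfl fun v _ => by rw [evalK_smul]; ring

end SqfIdeal

/-- The multigraded Betti number `β_{i,R}(I) = dim_k Tor_i(I,k)_R` of a
squarefree monomial ideal in the squarefree multidegree `R`, computed as the
dimension of the `i`-th homology of the degree-`R` strand of the Koszul
complex. -/
def multiBetti (k : Type w) [Field k] {W : Type u} (I : SqfIdeal W) (i : ℤ)
    (R : Finset W) : ℕ :=
  Module.finrank k (LinearMap.ker (SqfIdeal.koszulD k I R i)) -
    Module.finrank k (LinearMap.range (SqfIdeal.koszulD k I R (i + 1)))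

/-- The graded Betti number `β_{i,j}(I) = dim_k Tor_i(I,k)_j` of a squarefree
monomial ideal: the sum of the multigraded Betti numbers over the (squarefree)
multidegrees of cardinality `j`. -/
def gradedBetti (k : Type w) [Field k] {W : Type u} [Fintype W] (I : SqfIdeal W)
    (i : ℤ) (j : ℤ) : ℕ :=
  if 0 ≤ j then
    ∑ R ∈ Finset.powersetCard j.toNat (Finset.univ : Finset W), multiBetti k I i R
  else 0

/-- The `n`-th letterplace ideal `L(n,P)` of a poset `P`: the squarefree
monomial ideal on the variables `x_{(i,p)}`, `(i,p) ∈ [n] × P`, generated by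
the monomials `x_{(1,p₁)} ⋯ x_{(n,pₙ)}` with `p₁ ≤ p₂ ≤ ⋯ ≤ pₙ` in `P`. -/
def letterplace (n : ℕ) (P : Type u) [PartialOrder P] : SqfIdeal (Fin n × P) where
  carrier := {T | ∃ c : Fin n → P, Monotone c ∧ ∀ i, (i, c i) ∈ T}
  up_closed := by
    rintro S T ⟨c, hc, hm⟩ hST
    exact ⟨c, hc, fun i => hST (hm i)⟩

/-- The `i`-th part `R_i ⊆ P` of a multidegree `R ⊆ [n] × P`. -/
def part {n : ℕ} {P : Type u} (R : Finset (Fin n × P)) (i : Fin n) : Finset P :=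
  (R.filter fun q => q.1 = i).image Prod.snd

/-- The set of maximal elements of the induced subposet on `A`. -/
def maxSet {P : Type u} [PartialOrder P] (A : Finset P) : Finset P :=
  A.filter fun a => ∀ b ∈ A, a ≤ b → a = b

/-- The set of minimal elements of the induced subposet on `A`. -/
def minSet {P : Type u} [PartialOrder P] (A : Finset P) : Finset P :=
  A.filter fun a => ∀ b ∈ A, b ≤ a → a = b

/-- The transitive order `A ≤ B` on subsets of a poset: every maximal element
of `A` is below some minimal element of `B`, and every minimal element of `B`
is above some maximal element of `A`. -/
def subsetLE {P : Type u} [PartialOrder P] (A B : Finset P) : Prop :=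
  (∀ a ∈ maxSet A, ∃ b ∈ minSet B, a ≤ b) ∧
  (∀ b ∈ minSet B, ∃ a ∈ maxSet A, a ≤ b)

/-- The independence complex of the bipartite graph on two disjoint copies of
`P`, with left vertex set `A`, right vertex set `B`, and edges the pairs
`(p, q) ∈ A × B` with `p ≤ q` in `P`. -/
def XComplex {P : Type u} [PartialOrder P] (A B : Finset P) : SComplex (P ⊕ P) where
  faces := {F | (∀ x ∈ F, Sum.elim (· ∈ A) (· ∈ B) x) ∧
                ∀ p q : P, Sum.inl p ∈ F → Sum.inr q ∈ F → ¬ p ≤ q}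
  down_closed := by
    intro F G hF hGF
    exact ⟨fun x hx => hF.1 x (hGF hx), fun p q hp hq => hF.2 p q (hGF hp) (hGF hq)⟩

/-- `Y₁`: the simplicial complex on `A` whose faces are the subsets `F ⊆ A`
such that some `b ∈ B` dominates no element of `F`. -/
def Y1Complex {P : Type u} [PartialOrder P] (A B : Finset P) : SComplex P where
  faces := {F | (∀ x ∈ F, x ∈ A) ∧ ∃ b ∈ B, ∀ a ∈ F, ¬ a ≤ b}
  down_closed := by
    rintro F G ⟨hFA, b, hb, hFb⟩ hGF
    exact ⟨fun x hx => hFA x (hGF hx), b, hb, fun a ha => hFb a (hGF ha)⟩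

/-- `Y₂`: the simplicial complex on `B` whose faces are the subsets `F ⊆ B`
such that some `a ∈ A` is dominated by no element of `F`. -/
def Y2Complex {P : Type u} [PartialOrder P] (A B : Finset P) : SComplex P where
  faces := {F | (∀ x ∈ F, x ∈ B) ∧ ∃ a ∈ A, ∀ b ∈ F, ¬ a ≤ b}
  down_closed := by
    rintro F G ⟨hFB, a, ha, hFa⟩ hGF
    exact ⟨fun x hx => hFB x (hGF hx), a, ha, fun b hb => hFa b (hGF hb)⟩

/-- The restriction `Δ(n,P)|_R` of the Stanley–Reisner complex of the
letterplace ideal `L(n,P)` to the vertex set `R`. -/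
def deltaRes (n : ℕ) (P : Type u) [PartialOrder P] (R : Finset (Fin n × P)) :
    SComplex (Fin n × P) where
  faces := {F | F ⊆ R ∧ ¬ ∃ c : Fin n → P, Monotone c ∧ ∀ i, (i, c i) ∈ F}
  down_closed := by
    rintro F G ⟨hFR, hF⟩ hGF
    exact ⟨hGF.trans hFR, fun ⟨c, hc, hm⟩ => hF ⟨c, hc, fun i => hGF (hm i)⟩⟩

/-- `A` is a maximal antichain of the poset `P`. -/
def IsMaxAntichainFinset {P : Type u} [PartialOrder P] (A : Finset P) : Prop :=
  IsAntichain (· ≤ ·) (A : Set P) ∧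
    ∀ B : Finset P, IsAntichain (· ≤ ·) (B : Set P) → A ⊆ B → A = B

/-- The maximal cardinality of an antichain in the finite poset `P`. -/
def maxAntichainCard (P : Type u) [PartialOrder P] [Fintype P] : ℕ :=
  Finset.sup (Finset.univ.filter fun A : Finset P => IsAntichain (· ≤ ·) (A : Set P))
    Finset.card

/-- The independence complex of a bipartite graph, with parts `A` and `B` and
edge relation `E`. -/
def bipIndep {A : Type u} {B : Type v} (E : A → B → Prop) : SComplex (A ⊕ B) where
  faces := {F | ∀ a b, Sum.inl a ∈ F → Sum.inr b ∈ F → ¬ E a b}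
  down_closed := by
    intro F G hF hGF a b ha hb
    exact hF a b (hGF ha) (hGF hb)

/-- The `A`-part of a finite subset of `A ⊕ (B ⊕ C)`. -/
def aPart {A B C : Type u} (F : Finset (A ⊕ B ⊕ C)) : Finset A :=
  F.preimage Sum.inl Sum.inl_injective.injOn

/-- The `B`-part of a finite subset of `A ⊕ (B ⊕ C)`. -/
def bPart {A B C : Type u} (F : Finset (A ⊕ B ⊕ C)) : Finset B :=
  F.preimage (Sum.inr ∘ Sum.inl) ((Sum.inr_injective.comp Sum.inl_injective).injOn)

/-- The `C`-part of a finite subset of `A ⊕ (B ⊕ C)`. -/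
def cPart {A B C : Type u} (F : Finset (A ⊕ B ⊕ C)) : Finset C :=
  F.preimage (Sum.inr ∘ Sum.inr) ((Sum.inr_injective.comp Sum.inr_injective).injOn)

/-- The simplicial complex `X` on `A ∪ B ∪ C` whose Stanley–Reisner ideal is
generated by the pure-`A` generators of `I_{AB}`, the pure-`C` generators of
`I_{BC}`, and the monomials `x_𝐚 x_b x_𝐜` with `x_𝐚 x_b ∈ I_{AB}` and
`x_b x_𝐜 ∈ I_{BC}`.  Its faces are the sets `𝐚 ∪ 𝐛 ∪ 𝐜` such that `𝐚` is a
face of `X_{AB}`, `𝐜` is a face of `X_{BC}`, and for each `b ∈ 𝐛` either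
`𝐚 ∪ {b}` is a face of `X_{AB}` or `{b} ∪ 𝐜` is a face of `X_{BC}`. -/
def glueComplex {A B C : Type u} (XA : SComplex (A ⊕ B)) (XC : SComplex (B ⊕ C)) :
    SComplex (A ⊕ B ⊕ C) where
  faces := {F |
    (aPart F).map ⟨Sum.inl, Sum.inl_injective⟩ ∈ XA.faces ∧
    (cPart F).map ⟨Sum.inr, Sum.inr_injective⟩ ∈ XC.faces ∧
    ∀ b ∈ bPart F,
      insert (Sum.inr b) ((aPart F).map ⟨Sum.inl, Sum.inl_injective⟩) ∈ XA.faces ∨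
      insert (Sum.inl b) ((cPart F).map ⟨Sum.inr, Sum.inr_injective⟩) ∈ XC.faces}
  down_closed := by
    intro F G hF hGF
    have hA : aPart G ⊆ aPart F := fun x hx => by
      simp only [aPart, Finset.mem_preimage] at hx ⊢
      exact hGF hx
    have hB : bPart G ⊆ bPart F := fun x hx => by
      simp only [bPart, Finset.mem_preimage] at hx ⊢
      exact hGF hx
    have hC : cPart G ⊆ cPart F := fun x hx => by
      simp only [cPart, Finset.mem_preimage] at hx ⊢
      exact hGF hx
    refine ⟨XA.down_closed hF.1 (Finset.map_subset_map.mpr hA),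
            XC.down_closed hF.2.1 (Finset.map_subset_map.mpr hC),
            fun b hb => ?_⟩
    rcases hF.2.2 b (hB hb) with h | h
    · exact Or.inl (XA.down_closed h
        (Finset.insert_subset_insert _ (Finset.map_subset_map.mpr hA)))
    · exact Or.inr (XC.down_closed h
        (Finset.insert_subset_insert _ (Finset.map_subset_map.mpr hC)))
/-! ### Auxiliary development for Statement 4 -/

namespace S4

open Finset

/-- Support of a coordinate vector, as a finset. -/
def suppF {ι : Type u} [Fintype ι] (x : ι → ℝ) : Finset ι :=
  univ.filter (fun i => x i ≠ 0)

lemma mem_suppF {ι : Type u} [Fintype ι] {x : ι → ℝ} {i : ι} :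
    i ∈ suppF x ↔ x i ≠ 0 := by simp [suppF]

lemma suppF_subset {ι : Type u} [Fintype ι] {x y : ι → ℝ}
    (h : ∀ i, x i ≠ 0 → y i ≠ 0) : suppF x ⊆ suppF y := by
  intro i hi
  exact mem_suppF.mpr (h i (mem_suppF.mp hi))

lemma mem_realization_iff {V : Type u} [Fintype V] (X : SComplex V) (f : V → ℝ) :
    f ∈ X.realization ↔ (∀ v, 0 ≤ f v) ∧ (∑ v, f v) = 1 ∧ suppF f ∈ X.faces := by
  constructor
  · rintro ⟨h0, h1, F, hF, hsupp⟩
    exact ⟨h0, h1, X.down_closed hF (fun v hv => hsupp v (mem_suppF.mp hv))⟩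
  · rintro ⟨h0, h1, h2⟩
    exact ⟨h0, h1, suppF f, h2, fun v hv => mem_suppF.mpr hv⟩

lemma realization_congr {V : Type u} [Fintype V] {X Y : SComplex V}
    (h : X.faces = Y.faces) : X.realization = Y.realization := by
  unfold SComplex.realization
  rw [h]

/-! ### The `alpha` gadget: a continuous measure of the obstruction to a
predicate `Q` holding on the support of a nonnegative vector. -/

section Alpha

variable {ι : Type u} [Fintype ι] (Q : Finset ι → Prop)

/-- Auxiliary value for `alpha`. -/
noncomputable def aval (x : ι → ℝ) (S : Finset ι) : ℝ :=
  if Q S then 0 else if h : S.Nonempty then S.inf' h x else 1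

/-- `alpha Q x` is positive iff `Q` fails on the support of `x`
(for downward-closed `Q` and nonnegative `x`). -/
noncomputable def alpha (x : ι → ℝ) : ℝ :=
  (univ : Finset (Finset ι)).sup' ⟨∅, mem_univ ∅⟩ (aval Q x)

lemma aval_continuous (S : Finset ι) : Continuous (fun x : ι → ℝ => aval Q x S) := by
  by_cases h1 : Q S
  · simpa [aval, h1] using (continuous_const : Continuous fun _ : ι → ℝ => (0 : ℝ))
  · by_cases h2 : S.Nonempty
    · have : (fun x : ι → ℝ => aval Q x S) = S.inf' h2 (fun i (x : ι → ℝ) => x i) := by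
        funext x
        simp only [aval, h1, if_false, dif_pos h2, Finset.inf'_apply]
      rw [this]
      exact Continuous.finset_inf' h2 (fun i _ => continuous_apply i)
    · have : (fun x : ι → ℝ => aval Q x S) = fun _ => (1 : ℝ) := by
        funext x; simp [aval, h1, h2]
      rw [this]; exact continuous_const

lemma alpha_continuous : Continuous (alpha Q) := by
  have : alpha Q = (univ : Finset (Finset ι)).sup' ⟨∅, mem_univ ∅⟩
      (fun S (x : ι → ℝ) => aval Q x S) := by
    funext x
    exact (Finset.sup'_apply (C := fun _ : ι → ℝ => ℝ) _ (fun S (x : ι → ℝ) => aval Q x S) x).symm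
  rw [this]
  exact Continuous.finset_sup' _ (fun S _ => aval_continuous Q S)

variable {x : ι → ℝ}

lemma aval_nonneg (hx : ∀ i, 0 ≤ x i) (S : Finset ι) : 0 ≤ aval Q x S := by
  unfold aval
  split_ifs with h1 h2
  · exact le_refl 0
  · exact Finset.le_inf' h2 x (fun i _ => hx i)
  · exact zero_le_one

lemma alpha_nonneg (hx : ∀ i, 0 ≤ x i) : 0 ≤ alpha Q x :=
  le_trans (aval_nonneg Q hx ∅) (Finset.le_sup' _ (mem_univ ∅))

lemma alpha_le_zero (hQ : ∀ {S T : Finset ι}, S ⊆ T → Q T → Q S)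
    (hx : ∀ i, 0 ≤ x i) (h : Q (suppF x)) : alpha Q x ≤ 0 := by
  apply Finset.sup'_le
  intro S _
  unfold aval
  split_ifs with h1 h2
  · exact le_refl 0
  · -- S nonempty, ¬ Q S, hence S ⊄ suppF x
    by_cases hsub : S ⊆ suppF x
    · exact absurd (hQ hsub h) h1
    · rcases Finset.not_subset.mp hsub with ⟨i, hiS, hins⟩
      have : x i = 0 := by
        by_contra hxi
        exact hins (mem_suppF.mpr hxi)
      calc S.inf' h2 x ≤ x i := Finset.inf'_le x hiS
        _ = 0 := this
  · -- S = ∅ but ¬ Q ∅ contradicts Q (suppF x) via downward closure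
    rw [Finset.not_nonempty_iff_eq_empty] at h2
    subst h2
    exact absurd (hQ (Finset.empty_subset _) h) h1

lemma alpha_eq_zero_iff (hQ : ∀ {S T : Finset ι}, S ⊆ T → Q T → Q S)
    (hx : ∀ i, 0 ≤ x i) : alpha Q x = 0 ↔ Q (suppF x) := by
  constructor
  · intro h
    by_contra hQs
    have h1 : aval Q x (suppF x) ≤ alpha Q x := Finset.le_sup' _ (mem_univ _)
    rw [h] at h1
    by_cases h2 : (suppF x).Nonempty
    · have : (0 : ℝ) < (suppF x).inf' h2 x := by
        rw [Finset.lt_inf'_iff]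
        intro i hi
        exact lt_of_le_of_ne (hx i) (Ne.symm (mem_suppF.mp hi))
      rw [aval, if_neg hQs, dif_pos h2] at h1
      linarith
    · rw [aval, if_neg hQs, dif_neg h2] at h1
      linarith
  · intro h
    exact le_antisymm (alpha_le_zero Q hQ hx h) (alpha_nonneg Q hx)

/-- If we truncate the vector at a level at least `alpha`, the support of the
truncation satisfies `Q`. -/
lemma Q_supp_trunc {p : ℝ} (hp1 : p < 1) (hap : alpha Q x ≤ p) :
    Q (suppF (fun i => max (x i - p) 0)) := by
  by_contra hQs
  set S := suppF (fun i => max (x i - p) 0) with hS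
  have h1 : aval Q x S ≤ alpha Q x := Finset.le_sup' _ (mem_univ _)
  by_cases h2 : S.Nonempty
  · have hgt : p < S.inf' h2 x := by
      rw [Finset.lt_inf'_iff]
      intro i hi
      have := mem_suppF.mp hi
      by_contra hle
      push_neg at hle
      exact this (by simp [max_eq_right, sub_nonpos.mpr hle])
    rw [aval, if_neg hQs, dif_pos h2] at h1
    linarith
  · rw [aval, if_neg hQs, dif_neg h2] at h1
    linarith

end Alpha

/-! ### The interpolating complexes -/

section Main

variable {A B C : Type u} [Fintype A] [Fintype B] [Fintype C]

/-- The common vertex type. -/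
abbrev VT (A B C : Type u) : Type u := (A ⊕ B) ⊕ (B ⊕ C)

def xpart (f : VT A B C → ℝ) : A → ℝ := fun a => f (Sum.inl (Sum.inl a))
def s1part (f : VT A B C → ℝ) : B → ℝ := fun b => f (Sum.inl (Sum.inr b))
def s2part (f : VT A B C → ℝ) : B → ℝ := fun b => f (Sum.inr (Sum.inl b))
def zpart (f : VT A B C → ℝ) : C → ℝ := fun c => f (Sum.inr (Sum.inr c))

def pA (F : Finset (VT A B C)) : Finset A :=
  F.preimage (fun a => Sum.inl (Sum.inl a))
    ((Sum.inl_injective.comp Sum.inl_injective).injOn)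
def p1 (F : Finset (VT A B C)) : Finset B :=
  F.preimage (fun b => Sum.inl (Sum.inr b))
    ((Sum.inl_injective.comp Sum.inr_injective).injOn)
def p2 (F : Finset (VT A B C)) : Finset B :=
  F.preimage (fun b => Sum.inr (Sum.inl b))
    ((Sum.inr_injective.comp Sum.inl_injective).injOn)
def pC (F : Finset (VT A B C)) : Finset C :=
  F.preimage (fun c => Sum.inr (Sum.inr c))
    ((Sum.inr_injective.comp Sum.inr_injective).injOn)

@[simp] lemma mem_pA {F : Finset (VT A B C)} {a : A} :
    a ∈ pA F ↔ Sum.inl (Sum.inl a) ∈ F := Finset.mem_preimage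
@[simp] lemma mem_p1 {F : Finset (VT A B C)} {b : B} :
    b ∈ p1 F ↔ Sum.inl (Sum.inr b) ∈ F := Finset.mem_preimage
@[simp] lemma mem_p2 {F : Finset (VT A B C)} {b : B} :
    b ∈ p2 F ↔ Sum.inr (Sum.inl b) ∈ F := Finset.mem_preimage
@[simp] lemma mem_pC {F : Finset (VT A B C)} {c : C} :
    c ∈ pC F ↔ Sum.inr (Sum.inr c) ∈ F := Finset.mem_preimage

lemma pA_suppF (f : VT A B C → ℝ) : pA (suppF f) = suppF (xpart f) := by
  ext a; simp [mem_suppF, xpart]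
lemma p1_suppF (f : VT A B C → ℝ) : p1 (suppF f) = suppF (s1part f) := by
  ext b; simp [mem_suppF, s1part]
lemma p2_suppF (f : VT A B C → ℝ) : p2 (suppF f) = suppF (s2part f) := by
  ext b; simp [mem_suppF, s2part]
lemma pC_suppF (f : VT A B C → ℝ) : pC (suppF f) = suppF (zpart f) := by
  ext c; simp [mem_suppF, zpart]

def mA (S : Finset A) : Finset (A ⊕ B) := S.map ⟨Sum.inl, Sum.inl_injective⟩
def mC (S : Finset C) : Finset (B ⊕ C) := S.map ⟨Sum.inr, Sum.inr_injective⟩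

lemma mA_mono {S T : Finset A} (h : S ⊆ T) : mA (B := B) S ⊆ mA T :=
  Finset.map_subset_map.mpr h
lemma mC_mono {S T : Finset C} (h : S ⊆ T) : mC (B := B) S ⊆ mC T :=
  Finset.map_subset_map.mpr h

variable (XA : SComplex (A ⊕ B)) (XC : SComplex (B ⊕ C))

/-- `insert b 𝐚` is a face of `X_{AB}`. -/
def condA (S : Finset A) (b : B) : Prop := insert (Sum.inr b) (mA S) ∈ XA.faces
/-- `insert b 𝐜` is a face of `X_{BC}`. -/
def condC (S : Finset C) (b : B) : Prop := insert (Sum.inl b) (mC S) ∈ XC.faces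

lemma condA_mono {S T : Finset A} {b : B} (h : S ⊆ T) (hT : condA XA T b) :
    condA XA S b :=
  XA.down_closed hT (Finset.insert_subset_insert _ (mA_mono h))
lemma condC_mono {S T : Finset C} {b : B} (h : S ⊆ T) (hT : condC XC T b) :
    condC XC S b :=
  XC.down_closed hT (Finset.insert_subset_insert _ (mC_mono h))

lemma faceA_mono {S T : Finset A} (h : S ⊆ T) (hT : mA (B := B) T ∈ XA.faces) :
    mA S ∈ XA.faces := XA.down_closed hT (mA_mono h)
lemma faceC_mono {S T : Finset C} (h : S ⊆ T) (hT : mC (B := B) T ∈ XC.faces) :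
    mC S ∈ XC.faces := XC.down_closed hT (mC_mono h)

/-- The interpolating complex: the vertices `b ∈ M` have been merged (they
live on the first `B` copy, with the disjunctive condition), while the
vertices `b ∉ M` are still split over the two copies. -/
def ZC (M : Finset B) : SComplex (VT A B C) where
  faces := {F | mA (pA F) ∈ XA.faces ∧ mC (pC F) ∈ XC.faces ∧
    (∀ b ∈ p1 F, condA XA (pA F) b ∨ (b ∈ M ∧ condC XC (pC F) b)) ∧
    (∀ b ∈ p2 F, b ∉ M ∧ condC XC (pC F) b)}
  down_closed := by
    intro F G hF hGF
    have hA : pA G ⊆ pA F := fun a ha => mem_pA.mpr (hGF (mem_pA.mp ha))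
    have h1 : p1 G ⊆ p1 F := fun b hb => mem_p1.mpr (hGF (mem_p1.mp hb))
    have h2 : p2 G ⊆ p2 F := fun b hb => mem_p2.mpr (hGF (mem_p2.mp hb))
    have hC : pC G ⊆ pC F := fun c hc => mem_pC.mpr (hGF (mem_pC.mp hc))
    obtain ⟨hfA, hfC, hf1, hf2⟩ := hF
    refine ⟨faceA_mono XA hA hfA, faceC_mono XC hC hfC, ?_, ?_⟩
    · intro b hb
      rcases hf1 b (h1 hb) with h | ⟨hM, h⟩
      · exact Or.inl (condA_mono XA hA h)
      · exact Or.inr ⟨hM, condC_mono XC hC h⟩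
    · intro b hb
      exact ⟨(hf2 b (h2 hb)).1, condC_mono XC hC (hf2 b (h2 hb)).2⟩

/-- Membership in the realization of `ZC M`, in coordinates. -/
lemma mem_ZC_iff (M : Finset B) (f : VT A B C → ℝ) :
    f ∈ (ZC XA XC M).realization ↔
      (∀ v, 0 ≤ f v) ∧ (∑ v, f v) = 1 ∧
      mA (suppF (xpart f)) ∈ XA.faces ∧ mC (suppF (zpart f)) ∈ XC.faces ∧
      (∀ b, s1part f b ≠ 0 →
        condA XA (suppF (xpart f)) b ∨ (b ∈ M ∧ condC XC (suppF (zpart f)) b)) ∧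
      (∀ b, s2part f b ≠ 0 → b ∉ M ∧ condC XC (suppF (zpart f)) b) := by
  rw [mem_realization_iff]
  have hfaces : suppF f ∈ (ZC XA XC M).faces ↔
      (mA (suppF (xpart f)) ∈ XA.faces ∧ mC (suppF (zpart f)) ∈ XC.faces ∧
      (∀ b, s1part f b ≠ 0 →
        condA XA (suppF (xpart f)) b ∨ (b ∈ M ∧ condC XC (suppF (zpart f)) b)) ∧
      (∀ b, s2part f b ≠ 0 → b ∉ M ∧ condC XC (suppF (zpart f)) b)) := by
    show (_ ∧ _ ∧ _ ∧ _) ↔ _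
    rw [pA_suppF, pC_suppF, p1_suppF, p2_suppF]
    constructor
    · rintro ⟨u1, u2, u3, u4⟩
      exact ⟨u1, u2, fun b hb => u3 b (mem_suppF.mpr hb),
        fun b hb => u4 b (mem_suppF.mpr hb)⟩
    · rintro ⟨u1, u2, u3, u4⟩
      exact ⟨u1, u2, fun b hb => u3 b (mem_suppF.mp hb),
        fun b hb => u4 b (mem_suppF.mp hb)⟩
  tauto

/-! ### Sum decomposition and the basic maps -/

lemma sumVT (g : VT A B C → ℝ) :
    ∑ v, g v = (∑ a, xpart g a) + (∑ b, s1part g b) + (∑ b, s2part g b)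
      + (∑ c, zpart g c) := by
  rw [Fintype.sum_sum_type, Fintype.sum_sum_type, Fintype.sum_sum_type]
  unfold xpart s1part s2part zpart
  ring

lemma sum_split (g : B → ℝ) (b₀ : B) :
    ∑ b, g b = g b₀ + ∑ b ∈ univ.erase b₀, g b :=
  (Finset.add_sum_erase _ _ (mem_univ _)).symm

lemma max_sub_eq (x p : ℝ) : max (x - p) 0 = x - min x p := by
  rcases le_total x p with h | h
  · rw [max_eq_right (by linarith), min_eq_left h]; ring
  · rw [max_eq_left (by linarith), min_eq_right h]

/-- the truncation threshold scale -/
noncomputable def eps (A C : Type u) [Fintype A] [Fintype C] : ℝ :=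
  1 / (2 * (Fintype.card A + Fintype.card C) + 2)

lemma eps_pos : 0 < eps A C := by
  unfold eps; positivity

lemma eps_lt_one : eps A C < 1 := by
  unfold eps
  rw [div_lt_one (by positivity)]
  have h1 : (0:ℝ) ≤ (Fintype.card A + Fintype.card C : ℕ) := Nat.cast_nonneg _
  push_cast at h1 ⊢
  linarith

lemma card_mul_eps_le :
    ((Fintype.card A : ℝ) + (Fintype.card C : ℝ)) * eps A C ≤ 1 / 2 := by
  unfold eps
  rw [mul_one_div, div_le_div_iff₀ (by positivity) two_pos]
  have hn0 : (0:ℝ) ≤ (Fintype.card A : ℝ) + (Fintype.card C : ℝ) := by positivity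
  push_cast
  linarith

variable (b₀ : B)

noncomputable def alA (f : VT A B C → ℝ) : ℝ :=
  alpha (fun S => condA XA S b₀) (xpart f)
noncomputable def alC (f : VT A B C → ℝ) : ℝ :=
  alpha (fun S => condC XC S b₀) (zpart f)

noncomputable def sigma (f : VT A B C → ℝ) : ℝ :=
  (eps A C + min (alC XC b₀ f) (eps A C) - min (alA XA b₀ f) (eps A C))
    / (2 * eps A C)

lemma sigma_nonneg {f : VT A B C → ℝ} (hC : 0 ≤ alC XC b₀ f) :
    0 ≤ sigma XA XC b₀ f := by
  unfold sigma
  have h1 : min (alA XA b₀ f) (eps A C) ≤ eps A C := min_le_right _ _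
  have h2 : (0:ℝ) ≤ min (alC XC b₀ f) (eps A C) :=
    le_min hC (le_of_lt (eps_pos))
  apply div_nonneg _ (by have := eps_pos (A := A) (C := C); linarith)
  linarith


lemma one_sub_sigma (f : VT A B C → ℝ) :
    1 - sigma XA XC b₀ f =
    (eps A C + min (alA XA b₀ f) (eps A C) - min (alC XC b₀ f) (eps A C))
      / (2 * eps A C) := by
  unfold sigma
  have h : (2 * eps A C) ≠ 0 := by have := eps_pos (A := A) (C := C); positivity
  rw [eq_div_iff h, sub_mul, div_mul_cancel₀ _ h]
  ring

lemma sigma_le_one {f : VT A B C → ℝ} (hA : 0 ≤ alA XA b₀ f) :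
    sigma XA XC b₀ f ≤ 1 := by
  rw [← sub_nonneg, one_sub_sigma]
  have h1 : min (alC XC b₀ f) (eps A C) ≤ eps A C := min_le_right _ _
  have h2 : (0:ℝ) ≤ min (alA XA b₀ f) (eps A C) :=
    le_min hA (le_of_lt (eps_pos))
  apply div_nonneg _ (by have := eps_pos (A := A) (C := C); linarith)
  linarith

/-- The merging map. -/
noncomputable def phiRaw (f : VT A B C → ℝ) : VT A B C → ℝ
  | Sum.inl (Sum.inl a) => f (Sum.inl (Sum.inl a))
  | Sum.inl (Sum.inr b) =>
      if b = b₀ then s1part f b₀ + s2part f b₀ else f (Sum.inl (Sum.inr b))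
  | Sum.inr (Sum.inl b) => if b = b₀ then 0 else f (Sum.inr (Sum.inl b))
  | Sum.inr (Sum.inr c) => f (Sum.inr (Sum.inr c))

/-- The (unnormalized) splitting map. -/
noncomputable def psiRaw (f : VT A B C → ℝ) : VT A B C → ℝ
  | Sum.inl (Sum.inl a) =>
      max (xpart f a - min (alA XA b₀ f) (eps A C)) 0
  | Sum.inl (Sum.inr b) =>
      if b = b₀ then sigma XA XC b₀ f * s1part f b₀ else f (Sum.inl (Sum.inr b))
  | Sum.inr (Sum.inl b) =>
      if b = b₀ then (1 - sigma XA XC b₀ f) * s1part f b₀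
      else f (Sum.inr (Sum.inl b))
  | Sum.inr (Sum.inr c) =>
      max (zpart f c - min (alC XC b₀ f) (eps A C)) 0

/-- The (unnormalized) intermediate map: truncate `A`- and `C`-coordinates. -/
noncomputable def midRaw (f : VT A B C → ℝ) : VT A B C → ℝ
  | Sum.inl (Sum.inl a) =>
      max (xpart f a - min (alA XA b₀ f) (eps A C)) 0
  | Sum.inl (Sum.inr b) => f (Sum.inl (Sum.inr b))
  | Sum.inr (Sum.inl b) => f (Sum.inr (Sum.inl b))
  | Sum.inr (Sum.inr c) =>
      max (zpart f c - min (alC XC b₀ f) (eps A C)) 0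

noncomputable def psiN (f : VT A B C → ℝ) : ℝ := ∑ v, psiRaw XA XC b₀ f v
noncomputable def midN (f : VT A B C → ℝ) : ℝ := ∑ v, midRaw XA XC b₀ f v

noncomputable def psiFun (f : VT A B C → ℝ) : VT A B C → ℝ :=
  fun v => psiRaw XA XC b₀ f v / psiN XA XC b₀ f
noncomputable def midFun (f : VT A B C → ℝ) : VT A B C → ℝ :=
  fun v => midRaw XA XC b₀ f v / midN XA XC b₀ f

/-! ### Coordinate computations for the basic maps -/

section PartLemmas

variable (f : VT A B C → ℝ)

@[simp] lemma xpart_phiRaw (a : A) : xpart (phiRaw b₀ f) a = xpart f a := rfl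
@[simp] lemma zpart_phiRaw (c : C) : zpart (phiRaw b₀ f) c = zpart f c := rfl
lemma s1part_phiRaw (b : B) : s1part (phiRaw b₀ f) b =
    if b = b₀ then s1part f b₀ + s2part f b₀ else s1part f b := rfl
lemma s2part_phiRaw (b : B) : s2part (phiRaw b₀ f) b =
    if b = b₀ then 0 else s2part f b := rfl

@[simp] lemma xpart_psiRaw (a : A) : xpart (psiRaw XA XC b₀ f) a =
    max (xpart f a - min (alA XA b₀ f) (eps A C)) 0 := rfl
@[simp] lemma zpart_psiRaw (c : C) : zpart (psiRaw XA XC b₀ f) c =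
    max (zpart f c - min (alC XC b₀ f) (eps A C)) 0 := rfl
lemma s1part_psiRaw (b : B) : s1part (psiRaw XA XC b₀ f) b =
    if b = b₀ then sigma XA XC b₀ f * s1part f b₀ else s1part f b := rfl
lemma s2part_psiRaw (b : B) : s2part (psiRaw XA XC b₀ f) b =
    if b = b₀ then (1 - sigma XA XC b₀ f) * s1part f b₀ else s2part f b := rfl

@[simp] lemma xpart_midRaw (a : A) : xpart (midRaw XA XC b₀ f) a =
    max (xpart f a - min (alA XA b₀ f) (eps A C)) 0 := rfl
@[simp] lemma zpart_midRaw (c : C) : zpart (midRaw XA XC b₀ f) c =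
    max (zpart f c - min (alC XC b₀ f) (eps A C)) 0 := rfl
@[simp] lemma s1part_midRaw (b : B) : s1part (midRaw XA XC b₀ f) b =
    s1part f b := rfl
@[simp] lemma s2part_midRaw (b : B) : s2part (midRaw XA XC b₀ f) b =
    s2part f b := rfl

@[simp] lemma alA_phiRaw : alA XA b₀ (phiRaw b₀ f) = alA XA b₀ f := rfl
@[simp] lemma alC_phiRaw : alC XC b₀ (phiRaw b₀ f) = alC XC b₀ f := rfl
@[simp] lemma sigma_phiRaw : sigma XA XC b₀ (phiRaw b₀ f) = sigma XA XC b₀ f := rfl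

end PartLemmas

/-! ### Sum identities and bounds -/

lemma sum_ite_b (K : ℝ) (g : B → ℝ) :
    ∑ b, (if b = b₀ then K else g b) = K + ∑ b ∈ univ.erase b₀, g b := by
  rw [sum_split (fun b => if b = b₀ then K else g b) b₀]
  congr 1
  · simp
  · exact Finset.sum_congr rfl (fun b hb => if_neg (Finset.ne_of_mem_erase hb))

lemma sum_phiRaw (f : VT A B C → ℝ) : ∑ v, phiRaw b₀ f v = ∑ v, f v := by
  rw [sumVT, sumVT f]
  simp only [xpart_phiRaw, zpart_phiRaw]
  simp only [s1part_phiRaw, s2part_phiRaw]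
  rw [sum_ite_b, sum_ite_b]
  rw [sum_split (s1part f) b₀, sum_split (s2part f) b₀]
  ring

lemma midN_eq (f : VT A B C → ℝ) : midN XA XC b₀ f = ∑ v, f v
    - (∑ a, min (xpart f a) (min (alA XA b₀ f) (eps A C)))
    - (∑ c, min (zpart f c) (min (alC XC b₀ f) (eps A C))) := by
  unfold midN
  rw [sumVT, sumVT f]
  simp only [xpart_midRaw, zpart_midRaw, s1part_midRaw, s2part_midRaw, max_sub_eq]
  rw [Finset.sum_sub_distrib, Finset.sum_sub_distrib]
  ring

lemma psiN_eq (f : VT A B C → ℝ) :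
    psiN XA XC b₀ f = midN XA XC b₀ f - s2part f b₀ := by
  unfold psiN midN
  rw [sumVT, sumVT (midRaw XA XC b₀ f)]
  simp only [xpart_midRaw, zpart_midRaw, s1part_midRaw, s2part_midRaw,
    xpart_psiRaw, zpart_psiRaw]
  simp only [s1part_psiRaw, s2part_psiRaw]
  rw [sum_ite_b, sum_ite_b]
  rw [sum_split (s1part f) b₀, sum_split (s2part f) b₀]
  ring

lemma midN_ge_half {f : VT A B C → ℝ} (h1 : ∑ v, f v = 1) :
    1 / 2 ≤ midN XA XC b₀ f := by
  rw [midN_eq, h1]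
  have hA : ∑ a, min (xpart f a) (min (alA XA b₀ f) (eps A C))
      ≤ (Fintype.card A : ℝ) * eps A C := by
    calc ∑ a, min (xpart f a) (min (alA XA b₀ f) (eps A C))
        ≤ ∑ _a : A, eps A C := by
          apply Finset.sum_le_sum
          intro a _
          exact le_trans (min_le_right _ _) (min_le_right _ _)
      _ = (Fintype.card A : ℝ) * eps A C := by
          rw [Finset.sum_const, Finset.card_univ, nsmul_eq_mul]
  have hC : ∑ c, min (zpart f c) (min (alC XC b₀ f) (eps A C))
      ≤ (Fintype.card C : ℝ) * eps A C := by
    calc ∑ c, min (zpart f c) (min (alC XC b₀ f) (eps A C))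
        ≤ ∑ _c : C, eps A C := by
          apply Finset.sum_le_sum
          intro c _
          exact le_trans (min_le_right _ _) (min_le_right _ _)
      _ = (Fintype.card C : ℝ) * eps A C := by
          rw [Finset.sum_const, Finset.card_univ, nsmul_eq_mul]
  have := card_mul_eps_le (A := A) (C := C)
  linarith [hA, hC, this]

lemma midN_pos {f : VT A B C → ℝ} (h1 : ∑ v, f v = 1) :
    0 < midN XA XC b₀ f :=
  lt_of_lt_of_le (by norm_num) (midN_ge_half XA XC b₀ h1)

lemma psiN_pos {f : VT A B C → ℝ} (h1 : ∑ v, f v = 1) (h2 : s2part f b₀ = 0) :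
    0 < psiN XA XC b₀ f := by
  rw [psiN_eq, h2, sub_zero]
  exact midN_pos XA XC b₀ h1

lemma midN_phiRaw (f : VT A B C → ℝ) :
    midN XA XC b₀ (phiRaw b₀ f) = midN XA XC b₀ f := by
  rw [midN_eq, midN_eq, sum_phiRaw]
  simp only [xpart_phiRaw, zpart_phiRaw, alA_phiRaw, alC_phiRaw]

lemma psiN_phiRaw (f : VT A B C → ℝ) :
    psiN XA XC b₀ (phiRaw b₀ f) = midN XA XC b₀ f := by
  rw [psiN_eq, midN_phiRaw, s2part_phiRaw, if_pos rfl, sub_zero]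

/-! ### Continuity -/

lemma cont_coord (v : VT A B C) : Continuous (fun f : VT A B C → ℝ => f v) :=
  continuous_apply v

lemma cont_alA : Continuous (alA XA b₀ : (VT A B C → ℝ) → ℝ) := by
  unfold alA
  exact (alpha_continuous _).comp (continuous_pi (fun a => continuous_apply _))

lemma cont_alC : Continuous (alC XC b₀ : (VT A B C → ℝ) → ℝ) := by
  unfold alC
  exact (alpha_continuous _).comp (continuous_pi (fun c => continuous_apply _))

lemma cont_sigma : Continuous (sigma XA XC b₀ : (VT A B C → ℝ) → ℝ) := by
  unfold sigma
  apply Continuous.div_const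
  exact ((continuous_const.add ((cont_alC XC b₀).min continuous_const)).sub
    ((cont_alA XA b₀).min continuous_const))

lemma cont_phiRaw : Continuous (phiRaw b₀ : (VT A B C → ℝ) → VT A B C → ℝ) := by
  apply continuous_pi
  intro v
  rcases v with (a | b) | (b | c)
  · exact continuous_apply _
  · show Continuous fun f : VT A B C → ℝ =>
      if b = b₀ then s1part f b₀ + s2part f b₀ else f (Sum.inl (Sum.inr b))
    by_cases hb : b = b₀
    · simp only [hb, if_pos]
      exact (continuous_apply _).add (continuous_apply _)
    · simp only [hb, if_neg, if_false]
      exact continuous_apply _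
  · show Continuous fun f : VT A B C → ℝ =>
      if b = b₀ then (0:ℝ) else f (Sum.inr (Sum.inl b))
    by_cases hb : b = b₀
    · simp only [hb, if_pos]
      exact continuous_const
    · simp only [hb, if_neg, if_false]
      exact continuous_apply _
  · exact continuous_apply _

lemma cont_psiRaw :
    Continuous (psiRaw XA XC b₀ : (VT A B C → ℝ) → VT A B C → ℝ) := by
  apply continuous_pi
  intro v
  rcases v with (a | b) | (b | c)
  · show Continuous fun f : VT A B C → ℝ =>
      max (xpart f a - min (alA XA b₀ f) (eps A C)) 0
    exact (((continuous_apply _).sub ((cont_alA XA b₀).min continuous_const)).max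
      continuous_const)
  · show Continuous fun f : VT A B C → ℝ =>
      if b = b₀ then sigma XA XC b₀ f * s1part f b₀ else f (Sum.inl (Sum.inr b))
    by_cases hb : b = b₀
    · simp only [hb, if_pos]
      exact (cont_sigma XA XC b₀).mul (continuous_apply _)
    · simp only [hb, if_neg, if_false]
      exact continuous_apply _
  · show Continuous fun f : VT A B C → ℝ =>
      if b = b₀ then (1 - sigma XA XC b₀ f) * s1part f b₀
      else f (Sum.inr (Sum.inl b))
    by_cases hb : b = b₀
    · simp only [hb, if_pos]
      exact (continuous_const.sub (cont_sigma XA XC b₀)).mul (continuous_apply _)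
    · simp only [hb, if_neg, if_false]
      exact continuous_apply _
  · show Continuous fun f : VT A B C → ℝ =>
      max (zpart f c - min (alC XC b₀ f) (eps A C)) 0
    exact (((continuous_apply _).sub ((cont_alC XC b₀).min continuous_const)).max
      continuous_const)

lemma cont_midRaw :
    Continuous (midRaw XA XC b₀ : (VT A B C → ℝ) → VT A B C → ℝ) := by
  apply continuous_pi
  intro v
  rcases v with (a | b) | (b | c)
  · show Continuous fun f : VT A B C → ℝ =>
      max (xpart f a - min (alA XA b₀ f) (eps A C)) 0
    exact (((continuous_apply _).sub ((cont_alA XA b₀).min continuous_const)).max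
      continuous_const)
  · exact continuous_apply _
  · exact continuous_apply _
  · show Continuous fun f : VT A B C → ℝ =>
      max (zpart f c - min (alC XC b₀ f) (eps A C)) 0
    exact (((continuous_apply _).sub ((cont_alC XC b₀).min continuous_const)).max
      continuous_const)

lemma cont_psiN : Continuous (psiN XA XC b₀ : (VT A B C → ℝ) → ℝ) := by
  unfold psiN
  exact continuous_finset_sum _
    (fun v _ => (continuous_apply v).comp (cont_psiRaw XA XC b₀))

lemma cont_midN : Continuous (midN XA XC b₀ : (VT A B C → ℝ) → ℝ) := by
  unfold midN
  exact continuous_finset_sum _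
    (fun v _ => (continuous_apply v).comp (cont_midRaw XA XC b₀))

/-! ### Support lemmas -/

lemma max_ne_zero_iff {t : ℝ} : max t 0 ≠ 0 ↔ 0 < t := by
  constructor
  · intro h
    by_contra hle
    push_neg at hle
    exact h (max_eq_right hle)
  · intro h
    rw [max_eq_left (le_of_lt h)]
    exact ne_of_gt h

lemma supp_trunc_subset {ι : Type u} [Fintype ι] (x : ι → ℝ) {p : ℝ} (hp : 0 ≤ p) :
    suppF (fun i => max (x i - p) 0) ⊆ suppF x := by
  intro i hi
  rw [mem_suppF] at hi
  have h := max_ne_zero_iff.mp hi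
  exact mem_suppF.mpr (ne_of_gt (by linarith))

lemma suppF_div {ι : Type u} [Fintype ι] (g : ι → ℝ) {N : ℝ} (hN : N ≠ 0) :
    suppF (fun i => g i / N) = suppF g := by
  ext i
  simp [mem_suppF, div_eq_zero_iff, hN]

/-! ### The key legality lemmas -/

section Key

variable {XA : SComplex (A ⊕ B)} {XC : SComplex (B ⊕ C)} {b₀ : B}
variable {f : VT A B C → ℝ}

lemma condA_downward {S T : Finset A} {b : B} (h : S ⊆ T) :
    condA XA T b → condA XA S b := condA_mono XA h
lemma condC_downward {S T : Finset C} {b : B} (h : S ⊆ T) :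
    condC XC T b → condC XC S b := condC_mono XC h

lemma alA_nonneg (hx : ∀ a, 0 ≤ xpart f a) : 0 ≤ alA XA b₀ f :=
  alpha_nonneg _ hx
lemma alC_nonneg (hz : ∀ c, 0 ≤ zpart f c) : 0 ≤ alC XC b₀ f :=
  alpha_nonneg _ hz

lemma alA_eq_zero (hx : ∀ a, 0 ≤ xpart f a)
    (h : condA XA (suppF (xpart f)) b₀) : alA XA b₀ f = 0 :=
  (alpha_eq_zero_iff _ (fun hST h' => condA_mono XA hST h') hx).mpr h

lemma alC_eq_zero (hz : ∀ c, 0 ≤ zpart f c)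
    (h : condC XC (suppF (zpart f)) b₀) : alC XC b₀ f = 0 :=
  (alpha_eq_zero_iff _ (fun hST h' => condC_mono XC hST h') hz).mpr h

/-- The truncated `A`-support always satisfies `condA` provided `alA ≤ eps`. -/
lemma keyA_of_le (h : alA XA b₀ f ≤ eps A C) :
    condA XA (suppF (fun a =>
      max (xpart f a - min (alA XA b₀ f) (eps A C)) 0)) b₀ := by
  have hp1 : min (alA XA b₀ f) (eps A C) < 1 :=
    lt_of_le_of_lt (min_le_right _ _) eps_lt_one
  exact Q_supp_trunc _ hp1 (le_min (le_refl _) h)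

lemma keyC_of_le (h : alC XC b₀ f ≤ eps A C) :
    condC XC (suppF (fun c =>
      max (zpart f c - min (alC XC b₀ f) (eps A C)) 0)) b₀ := by
  have hp1 : min (alC XC b₀ f) (eps A C) < 1 :=
    lt_of_le_of_lt (min_le_right _ _) eps_lt_one
  exact Q_supp_trunc _ hp1 (le_min (le_refl _) h)

lemma keyA0 (hx : ∀ a, 0 ≤ xpart f a)
    (h : condA XA (suppF (xpart f)) b₀) :
    condA XA (suppF (fun a =>
      max (xpart f a - min (alA XA b₀ f) (eps A C)) 0)) b₀ := by
  apply keyA_of_le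
  rw [alA_eq_zero hx h]
  exact le_of_lt eps_pos

lemma keyC0 (hz : ∀ c, 0 ≤ zpart f c)
    (h : condC XC (suppF (zpart f)) b₀) :
    condC XC (suppF (fun c =>
      max (zpart f c - min (alC XC b₀ f) (eps A C)) 0)) b₀ := by
  apply keyC_of_le
  rw [alC_eq_zero hz h]
  exact le_of_lt eps_pos

lemma keyA (hx : ∀ a, 0 ≤ xpart f a) (hz : ∀ c, 0 ≤ zpart f c)
    (hcond : condA XA (suppF (xpart f)) b₀ ∨ condC XC (suppF (zpart f)) b₀)
    (hσ : sigma XA XC b₀ f ≠ 0) :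
    condA XA (suppF (fun a =>
      max (xpart f a - min (alA XA b₀ f) (eps A C)) 0)) b₀ := by
  apply keyA_of_le
  rcases hcond with h | h
  · rw [alA_eq_zero hx h]
    exact le_of_lt eps_pos
  · have hC0 : alC XC b₀ f = 0 := alC_eq_zero hz h
    by_contra hgt
    push_neg at hgt
    apply hσ
    unfold sigma
    rw [hC0, min_eq_left (le_of_lt eps_pos), min_eq_right (le_of_lt hgt)]
    simp

lemma keyC (hx : ∀ a, 0 ≤ xpart f a) (hz : ∀ c, 0 ≤ zpart f c)
    (hcond : condA XA (suppF (xpart f)) b₀ ∨ condC XC (suppF (zpart f)) b₀)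
    (hσ : 1 - sigma XA XC b₀ f ≠ 0) :
    condC XC (suppF (fun c =>
      max (zpart f c - min (alC XC b₀ f) (eps A C)) 0)) b₀ := by
  apply keyC_of_le
  rcases hcond with h | h
  · have hA0 : alA XA b₀ f = 0 := alA_eq_zero hx h
    by_contra hgt
    push_neg at hgt
    apply hσ
    rw [one_sub_sigma]
    rw [hA0, min_eq_left (le_of_lt eps_pos), min_eq_right (le_of_lt hgt)]
    simp
  · rw [alC_eq_zero hz h]
    exact le_of_lt eps_pos

end Key

/-! ### Membership of the basic maps -/

section Mem

variable {M : Finset B}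

lemma phi_mem (M : Finset B) {f : VT A B C → ℝ}
    (hf : f ∈ (ZC XA XC M).realization) :
    phiRaw b₀ f ∈ (ZC XA XC (insert b₀ M)).realization := by
  rw [mem_ZC_iff] at hf ⊢
  obtain ⟨h0, h1, hfA, hfC, hs1, hs2⟩ := hf
  refine ⟨?_, ?_, hfA, hfC, ?_, ?_⟩
  · intro v
    rcases v with (a | b) | (b | c)
    · exact h0 _
    · show 0 ≤ if b = b₀ then s1part f b₀ + s2part f b₀ else f (Sum.inl (Sum.inr b))
      split_ifs
      · exact add_nonneg (h0 _) (h0 _)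
      · exact h0 _
    · show 0 ≤ if b = b₀ then (0:ℝ) else f (Sum.inr (Sum.inl b))
      split_ifs
      · exact le_refl 0
      · exact h0 _
    · exact h0 _
  · rw [sum_phiRaw, h1]
  · intro b hb
    rw [s1part_phiRaw] at hb
    by_cases hbb : b = b₀
    · subst hbb
      rw [if_pos rfl] at hb
      have hor : s1part f b ≠ 0 ∨ s2part f b ≠ 0 := by
        by_contra hcon
        push_neg at hcon
        rw [hcon.1, hcon.2] at hb
        simp at hb
      rcases hor with h | h
      · rcases hs1 b h with hc | ⟨hm, hc⟩
        · exact Or.inl hc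
        · exact Or.inr ⟨Finset.mem_insert_of_mem hm, hc⟩
      · exact Or.inr ⟨Finset.mem_insert_self _ _, (hs2 b h).2⟩
    · rw [if_neg hbb] at hb
      rcases hs1 b hb with hc | ⟨hm, hc⟩
      · exact Or.inl hc
      · exact Or.inr ⟨Finset.mem_insert_of_mem hm, hc⟩
  · intro b hb
    rw [s2part_phiRaw] at hb
    by_cases hbb : b = b₀
    · rw [if_pos hbb] at hb
      exact absurd rfl hb
    · rw [if_neg hbb] at hb
      obtain ⟨hm, hc⟩ := hs2 b hb
      refine ⟨?_, hc⟩
      rw [Finset.mem_insert]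
      push_neg
      exact ⟨hbb, hm⟩

lemma s2b0_eq_zero (M : Finset B) {f : VT A B C → ℝ}
    (hf : f ∈ (ZC XA XC (insert b₀ M)).realization) : s2part f b₀ = 0 := by
  rw [mem_ZC_iff] at hf
  by_contra h
  exact (hf.2.2.2.2.2 b₀ h).1 (Finset.mem_insert_self _ _)

lemma psi_mem (M : Finset B) (hb₀ : b₀ ∉ M) {f : VT A B C → ℝ}
    (hf : f ∈ (ZC XA XC (insert b₀ M)).realization) :
    psiFun XA XC b₀ f ∈ (ZC XA XC M).realization := by
  have hs2b0 : s2part f b₀ = 0 := s2b0_eq_zero XA XC b₀ M hf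
  rw [mem_ZC_iff] at hf ⊢
  obtain ⟨h0, h1, hfA, hfC, hs1, hs2⟩ := hf
  have hx0 : ∀ a, 0 ≤ xpart f a := fun a => h0 _
  have hz0 : ∀ c, 0 ≤ zpart f c := fun c => h0 _
  have hN : 0 < psiN XA XC b₀ f := psiN_pos XA XC b₀ h1 hs2b0
  have hNne : psiN XA XC b₀ f ≠ 0 := ne_of_gt hN
  have hσ0 : 0 ≤ sigma XA XC b₀ f := sigma_nonneg XA XC b₀ (alC_nonneg hz0)
  have hσ1 : sigma XA XC b₀ f ≤ 1 := sigma_le_one XA XC b₀ (alA_nonneg hx0)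
  have hraw0 : ∀ v, 0 ≤ psiRaw XA XC b₀ f v := by
    intro v
    rcases v with (a | b) | (b | c)
    · exact le_max_right _ _
    · show 0 ≤ if b = b₀ then sigma XA XC b₀ f * s1part f b₀
        else f (Sum.inl (Sum.inr b))
      split_ifs
      · exact mul_nonneg hσ0 (h0 _)
      · exact h0 _
    · show 0 ≤ if b = b₀ then (1 - sigma XA XC b₀ f) * s1part f b₀
        else f (Sum.inr (Sum.inl b))
      split_ifs
      · exact mul_nonneg (by linarith) (h0 _)
      · exact h0 _
    · exact le_max_right _ _
  have hsx : suppF (xpart (psiFun XA XC b₀ f)) =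
      suppF (fun a => max (xpart f a - min (alA XA b₀ f) (eps A C)) 0) :=
    suppF_div (fun a => max (xpart f a - min (alA XA b₀ f) (eps A C)) 0) hNne
  have hsz : suppF (zpart (psiFun XA XC b₀ f)) =
      suppF (fun c => max (zpart f c - min (alC XC b₀ f) (eps A C)) 0) :=
    suppF_div (fun c => max (zpart f c - min (alC XC b₀ f) (eps A C)) 0) hNne
  have hsubA : suppF (fun a => max (xpart f a - min (alA XA b₀ f) (eps A C)) 0)
      ⊆ suppF (xpart f) :=
    supp_trunc_subset _ (le_min (alA_nonneg hx0) (le_of_lt eps_pos))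
  have hsubC : suppF (fun c => max (zpart f c - min (alC XC b₀ f) (eps A C)) 0)
      ⊆ suppF (zpart f) :=
    supp_trunc_subset _ (le_min (alC_nonneg hz0) (le_of_lt eps_pos))
  refine ⟨fun v => div_nonneg (hraw0 v) (le_of_lt hN), ?_, ?_, ?_, ?_, ?_⟩
  · show ∑ v, psiRaw XA XC b₀ f v / psiN XA XC b₀ f = 1
    rw [← Finset.sum_div]
    exact div_self hNne
  · rw [hsx]
    exact faceA_mono XA hsubA hfA
  · rw [hsz]
    exact faceC_mono XC hsubC hfC
  · intro b hb
    rw [hsx, hsz]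
    have hb' : s1part (psiRaw XA XC b₀ f) b ≠ 0 := by
      intro h
      apply hb
      show s1part (psiRaw XA XC b₀ f) b / psiN XA XC b₀ f = 0
      rw [h, zero_div]
    rw [s1part_psiRaw] at hb'
    by_cases hbb : b = b₀
    · subst hbb
      rw [if_pos rfl] at hb'
      obtain ⟨hσne, hgb⟩ := mul_ne_zero_iff.mp hb'
      have hcond : condA XA (suppF (xpart f)) b ∨ condC XC (suppF (zpart f)) b := by
        rcases hs1 b hgb with hc | ⟨_, hc⟩
        · exact Or.inl hc
        · exact Or.inr hc
      exact Or.inl (keyA hx0 hz0 hcond hσne)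
    · rw [if_neg hbb] at hb'
      rcases hs1 b hb' with hc | ⟨hm, hc⟩
      · exact Or.inl (condA_downward hsubA hc)
      · have hmM : b ∈ M := by
          rcases Finset.mem_insert.mp hm with h | h
          · exact absurd h hbb
          · exact h
        exact Or.inr ⟨hmM, condC_downward hsubC hc⟩
  · intro b hb
    rw [hsz]
    have hb' : s2part (psiRaw XA XC b₀ f) b ≠ 0 := by
      intro h
      apply hb
      show s2part (psiRaw XA XC b₀ f) b / psiN XA XC b₀ f = 0
      rw [h, zero_div]
    rw [s2part_psiRaw] at hb'
    by_cases hbb : b = b₀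
    · subst hbb
      rw [if_pos rfl] at hb'
      obtain ⟨hσne, hgb⟩ := mul_ne_zero_iff.mp hb'
      have hcond : condA XA (suppF (xpart f)) b ∨ condC XC (suppF (zpart f)) b := by
        rcases hs1 b hgb with hc | ⟨_, hc⟩
        · exact Or.inl hc
        · exact Or.inr hc
      exact ⟨hb₀, keyC hx0 hz0 hcond (by simpa [sub_ne_zero] using hσne)⟩
    · rw [if_neg hbb] at hb'
      obtain ⟨hm, hc⟩ := hs2 b hb'
      refine ⟨fun hmm => hm (Finset.mem_insert_of_mem hmm), condC_downward hsubC hc⟩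

lemma mid_mem (M : Finset B) (hb₀ : b₀ ∉ M) {f : VT A B C → ℝ}
    (hf : f ∈ (ZC XA XC M).realization) :
    midFun XA XC b₀ f ∈ (ZC XA XC M).realization := by
  rw [mem_ZC_iff] at hf ⊢
  obtain ⟨h0, h1, hfA, hfC, hs1, hs2⟩ := hf
  have hx0 : ∀ a, 0 ≤ xpart f a := fun a => h0 _
  have hz0 : ∀ c, 0 ≤ zpart f c := fun c => h0 _
  have hN : 0 < midN XA XC b₀ f := midN_pos XA XC b₀ h1
  have hNne : midN XA XC b₀ f ≠ 0 := ne_of_gt hN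
  have hraw0 : ∀ v, 0 ≤ midRaw XA XC b₀ f v := by
    intro v
    rcases v with (a | b) | (b | c)
    · exact le_max_right _ _
    · exact h0 _
    · exact h0 _
    · exact le_max_right _ _
  have hsx : suppF (xpart (midFun XA XC b₀ f)) =
      suppF (fun a => max (xpart f a - min (alA XA b₀ f) (eps A C)) 0) :=
    suppF_div (fun a => max (xpart f a - min (alA XA b₀ f) (eps A C)) 0) hNne
  have hsz : suppF (zpart (midFun XA XC b₀ f)) =
      suppF (fun c => max (zpart f c - min (alC XC b₀ f) (eps A C)) 0) :=
    suppF_div (fun c => max (zpart f c - min (alC XC b₀ f) (eps A C)) 0) hNne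
  have hsubA : suppF (fun a => max (xpart f a - min (alA XA b₀ f) (eps A C)) 0)
      ⊆ suppF (xpart f) :=
    supp_trunc_subset _ (le_min (alA_nonneg hx0) (le_of_lt eps_pos))
  have hsubC : suppF (fun c => max (zpart f c - min (alC XC b₀ f) (eps A C)) 0)
      ⊆ suppF (zpart f) :=
    supp_trunc_subset _ (le_min (alC_nonneg hz0) (le_of_lt eps_pos))
  refine ⟨fun v => div_nonneg (hraw0 v) (le_of_lt hN), ?_, ?_, ?_, ?_, ?_⟩
  · show ∑ v, midRaw XA XC b₀ f v / midN XA XC b₀ f = 1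
    rw [← Finset.sum_div]
    exact div_self hNne
  · rw [hsx]
    exact faceA_mono XA hsubA hfA
  · rw [hsz]
    exact faceC_mono XC hsubC hfC
  · intro b hb
    rw [hsx, hsz]
    have hb' : s1part f b ≠ 0 := by
      intro h
      apply hb
      show s1part f b / midN XA XC b₀ f = 0
      rw [h, zero_div]
    by_cases hbb : b = b₀
    · subst hbb
      have hc : condA XA (suppF (xpart f)) b := by
        rcases hs1 b hb' with hc | ⟨hm, _⟩
        · exact hc
        · exact absurd hm hb₀
      exact Or.inl (keyA0 hx0 hc)
    · rcases hs1 b hb' with hc | ⟨hm, hc⟩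
      · exact Or.inl (condA_downward hsubA hc)
      · exact Or.inr ⟨hm, condC_downward hsubC hc⟩
  · intro b hb
    rw [hsz]
    have hb' : s2part f b ≠ 0 := by
      intro h
      apply hb
      show s2part f b / midN XA XC b₀ f = 0
      rw [h, zero_div]
    obtain ⟨hm, hc⟩ := hs2 b hb'
    by_cases hbb : b = b₀
    · subst hbb
      exact ⟨hm, keyC0 hz0 hc⟩
    · exact ⟨hm, condC_downward hsubC hc⟩

end Mem

/-! ### The union of supports along the second homotopy is a face -/

lemma pA_union (S T : Finset (VT A B C)) : pA (S ∪ T) = pA S ∪ pA T := by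
  ext a; simp
lemma p1_union (S T : Finset (VT A B C)) : p1 (S ∪ T) = p1 S ∪ p1 T := by
  ext b; simp
lemma p2_union (S T : Finset (VT A B C)) : p2 (S ∪ T) = p2 S ∪ p2 T := by
  ext b; simp
lemma pC_union (S T : Finset (VT A B C)) : pC (S ∪ T) = pC S ∪ pC T := by
  ext c; simp

lemma union_face (M : Finset B) (hb₀ : b₀ ∉ M) {u : VT A B C → ℝ}
    (hu : u ∈ (ZC XA XC M).realization) :
    suppF (midFun XA XC b₀ u) ∪ suppF (psiFun XA XC b₀ (phiRaw b₀ u))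
      ∈ (ZC XA XC M).faces := by
  have hφ : phiRaw b₀ u ∈ (ZC XA XC (insert b₀ M)).realization :=
    phi_mem XA XC b₀ M hu
  have hs2b0 : s2part (phiRaw b₀ u) b₀ = 0 := s2b0_eq_zero XA XC b₀ M hφ
  rw [mem_ZC_iff] at hu hφ
  obtain ⟨h0, h1, hfA, hfC, hs1, hs2⟩ := hu
  obtain ⟨g0, g1, _, _, gs1, gs2⟩ := hφ
  have hx0 : ∀ a, 0 ≤ xpart u a := fun a => h0 _
  have hz0 : ∀ c, 0 ≤ zpart u c := fun c => h0 _
  have hNm : midN XA XC b₀ u ≠ 0 := ne_of_gt (midN_pos XA XC b₀ h1)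
  have hNp : psiN XA XC b₀ (phiRaw b₀ u) ≠ 0 := by
    rw [psiN_phiRaw]; exact hNm
  -- the truncated coordinate vectors (for `u`; those of `phiRaw u` are defeq)
  set xh : A → ℝ := fun a => max (xpart u a - min (alA XA b₀ u) (eps A C)) 0 with hxh
  set zh : C → ℝ := fun c => max (zpart u c - min (alC XC b₀ u) (eps A C)) 0 with hzh
  have hsubA : suppF xh ⊆ suppF (xpart u) :=
    supp_trunc_subset _ (le_min (alA_nonneg hx0) (le_of_lt eps_pos))
  have hsubC : suppF zh ⊆ suppF (zpart u) :=
    supp_trunc_subset _ (le_min (alC_nonneg hz0) (le_of_lt eps_pos))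
  -- part computations for the union
  have exm : suppF (xpart (midFun XA XC b₀ u)) = suppF xh := suppF_div xh hNm
  have exp' : suppF (xpart (psiFun XA XC b₀ (phiRaw b₀ u))) = suppF xh :=
    suppF_div xh hNp
  have ezm : suppF (zpart (midFun XA XC b₀ u)) = suppF zh := suppF_div zh hNm
  have ezp : suppF (zpart (psiFun XA XC b₀ (phiRaw b₀ u))) = suppF zh :=
    suppF_div zh hNp
  have epA : pA (suppF (midFun XA XC b₀ u) ∪
      suppF (psiFun XA XC b₀ (phiRaw b₀ u))) = suppF xh := by
    rw [pA_union, pA_suppF, pA_suppF, exm, exp', Finset.union_self]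
  have epC : pC (suppF (midFun XA XC b₀ u) ∪
      suppF (psiFun XA XC b₀ (phiRaw b₀ u))) = suppF zh := by
    rw [pC_union, pC_suppF, pC_suppF, ezm, ezp, Finset.union_self]
  -- `condA` at `b₀` holds on the truncated support whenever needed
  have hcondA_of : ∀ b : B, sigma XA XC b₀ (phiRaw b₀ u) *
      s1part (phiRaw b₀ u) b₀ ≠ 0 → condA XA (suppF xh) b₀ := by
    intro b hne
    obtain ⟨hσne, hgb⟩ := mul_ne_zero_iff.mp hne
    have hcond : condA XA (suppF (xpart (phiRaw b₀ u))) b₀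
        ∨ condC XC (suppF (zpart (phiRaw b₀ u))) b₀ := by
      rcases gs1 b₀ hgb with hc | ⟨_, hc⟩
      · exact Or.inl hc
      · exact Or.inr hc
    exact keyA (f := phiRaw b₀ u) (fun a => g0 _) (fun c => g0 _) hcond hσne
  have hcondC_of : (1 - sigma XA XC b₀ (phiRaw b₀ u)) *
      s1part (phiRaw b₀ u) b₀ ≠ 0 → condC XC (suppF zh) b₀ := by
    intro hne
    obtain ⟨hσne, hgb⟩ := mul_ne_zero_iff.mp hne
    have hcond : condA XA (suppF (xpart (phiRaw b₀ u))) b₀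
        ∨ condC XC (suppF (zpart (phiRaw b₀ u))) b₀ := by
      rcases gs1 b₀ hgb with hc | ⟨_, hc⟩
      · exact Or.inl hc
      · exact Or.inr hc
    exact keyC (f := phiRaw b₀ u) (fun a => g0 _) (fun c => g0 _) hcond hσne
  refine ⟨?_, ?_, ?_, ?_⟩
  · rw [epA]
    exact faceA_mono XA hsubA hfA
  · rw [epC]
    exact faceC_mono XC hsubC hfC
  · intro b hb
    rw [epA, epC]
    rw [p1_union, Finset.mem_union, p1_suppF, p1_suppF] at hb
    by_cases hbb : b = b₀
    · rw [hbb] at hb ⊢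
      rcases hb with hb | hb
      · -- from the mid side: `s1part u b₀ ≠ 0`
        rw [mem_suppF] at hb
        have hb' : s1part u b₀ ≠ 0 := by
          intro h
          apply hb
          show s1part u b₀ / midN XA XC b₀ u = 0
          rw [h, zero_div]
        have hc : condA XA (suppF (xpart u)) b₀ := by
          rcases hs1 b₀ hb' with hc | ⟨hm, _⟩
          · exact hc
          · exact absurd hm hb₀
        exact Or.inl (keyA0 hx0 hc)
      · -- from the psi side
        rw [mem_suppF] at hb
        have hb' : s1part (psiRaw XA XC b₀ (phiRaw b₀ u)) b₀ ≠ 0 := by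
          intro h
          apply hb
          show s1part (psiRaw XA XC b₀ (phiRaw b₀ u)) b₀
            / psiN XA XC b₀ (phiRaw b₀ u) = 0
          rw [h, zero_div]
        rw [s1part_psiRaw, if_pos rfl] at hb'
        exact Or.inl (hcondA_of b₀ hb')
    · -- coordinates agree with those of `u`
      have hb' : s1part u b ≠ 0 := by
        rcases hb with hb | hb
        · rw [mem_suppF] at hb
          intro h
          apply hb
          show s1part u b / midN XA XC b₀ u = 0
          rw [h, zero_div]
        · rw [mem_suppF] at hb
          intro h
          apply hb
          show s1part (psiRaw XA XC b₀ (phiRaw b₀ u)) b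
            / psiN XA XC b₀ (phiRaw b₀ u) = 0
          rw [s1part_psiRaw, if_neg hbb, s1part_phiRaw, if_neg hbb, h, zero_div]
      rcases hs1 b hb' with hc | ⟨hm, hc⟩
      · exact Or.inl (condA_downward hsubA hc)
      · exact Or.inr ⟨hm, condC_downward hsubC hc⟩
  · intro b hb
    rw [epC]
    rw [p2_union, Finset.mem_union, p2_suppF, p2_suppF] at hb
    by_cases hbb : b = b₀
    · rw [hbb] at hb ⊢
      rcases hb with hb | hb
      · rw [mem_suppF] at hb
        have hb' : s2part u b₀ ≠ 0 := by
          intro h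
          apply hb
          show s2part u b₀ / midN XA XC b₀ u = 0
          rw [h, zero_div]
        obtain ⟨hm, hc⟩ := hs2 b₀ hb'
        exact ⟨hm, keyC0 hz0 hc⟩
      · rw [mem_suppF] at hb
        have hb' : s2part (psiRaw XA XC b₀ (phiRaw b₀ u)) b₀ ≠ 0 := by
          intro h
          apply hb
          show s2part (psiRaw XA XC b₀ (phiRaw b₀ u)) b₀
            / psiN XA XC b₀ (phiRaw b₀ u) = 0
          rw [h, zero_div]
        rw [s2part_psiRaw, if_pos rfl] at hb'
        exact ⟨hb₀, hcondC_of hb'⟩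
    · have hb' : s2part u b ≠ 0 := by
        rcases hb with hb | hb
        · rw [mem_suppF] at hb
          intro h
          apply hb
          show s2part u b / midN XA XC b₀ u = 0
          rw [h, zero_div]
        · rw [mem_suppF] at hb
          intro h
          apply hb
          show s2part (psiRaw XA XC b₀ (phiRaw b₀ u)) b
            / psiN XA XC b₀ (phiRaw b₀ u) = 0
          rw [s2part_psiRaw, if_neg hbb, s2part_phiRaw, if_neg hbb, h, zero_div]
      obtain ⟨hm, hc⟩ := hs2 b hb'
      exact ⟨hm, condC_downward hsubC hc⟩

/-! ### Straight-line homotopies -/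

/-- A straight-line homotopy between two maps into the realization of a
complex, provided the union of the supports is always a face. -/
noncomputable def lineHomotopy {V' : Type u} [Fintype V'] (X : SComplex V')
    {T : Type v} [TopologicalSpace T]
    (φ₁ φ₂ : C(T, ↥(X.realization)))
    (hU : ∀ t, ∃ W ∈ X.faces, ∀ v,
      ((φ₁ t : V' → ℝ) v ≠ 0 ∨ (φ₂ t : V' → ℝ) v ≠ 0) → v ∈ W) :
    φ₁.Homotopy φ₂ where
  toFun := fun p =>
    ⟨fun v => (1 - (p.1 : ℝ)) * (φ₁ p.2 : V' → ℝ) v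
        + (p.1 : ℝ) * (φ₂ p.2 : V' → ℝ) v, by
      obtain ⟨hf0, hf1, hfF⟩ := (mem_realization_iff X _).mp (φ₁ p.2).2
      obtain ⟨hg0, hg1, hgF⟩ := (mem_realization_iff X _).mp (φ₂ p.2).2
      rw [mem_realization_iff]
      refine ⟨?_, ?_, ?_⟩
      · intro v
        have h1 : (0:ℝ) ≤ (p.1 : ℝ) := p.1.2.1
        have h2 : (p.1 : ℝ) ≤ 1 := p.1.2.2
        exact add_nonneg (mul_nonneg (by linarith) (hf0 v))
          (mul_nonneg h1 (hg0 v))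
      · rw [Finset.sum_add_distrib, ← Finset.mul_sum, ← Finset.mul_sum, hf1, hg1]
        ring
      · obtain ⟨W, hW, hWs⟩ := hU p.2
        apply X.down_closed hW
        intro v hv
        rw [mem_suppF] at hv
        apply hWs v
        by_contra hcon
        push_neg at hcon
        obtain ⟨hv1, hv2⟩ := hcon
        apply hv
        rw [hv1, hv2]
        ring⟩
  continuous_toFun := by
    apply Continuous.subtype_mk
    apply continuous_pi
    intro v
    have hθ : Continuous fun p : ↥unitInterval × T => (p.1 : ℝ) :=
      continuous_subtype_val.comp continuous_fst
    have h1 : Continuous fun p : ↥unitInterval × T => (φ₁ p.2 : V' → ℝ) v :=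
      (continuous_apply v).comp
        (continuous_subtype_val.comp (φ₁.continuous.comp continuous_snd))
    have h2 : Continuous fun p : ↥unitInterval × T => (φ₂ p.2 : V' → ℝ) v :=
      (continuous_apply v).comp
        (continuous_subtype_val.comp (φ₂.continuous.comp continuous_snd))
    exact ((continuous_const.sub hθ).mul h1).add (hθ.mul h2)
  map_zero_left := by
    intro t
    apply Subtype.ext
    funext v
    show (1 - ((0 : ↥unitInterval) : ℝ)) * (φ₁ t : V' → ℝ) v
        + ((0 : ↥unitInterval) : ℝ) * (φ₂ t : V' → ℝ) v = (φ₁ t : V' → ℝ) v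
    norm_num
  map_one_left := by
    intro t
    apply Subtype.ext
    funext v
    show (1 - ((1 : ↥unitInterval) : ℝ)) * (φ₁ t : V' → ℝ) v
        + ((1 : ↥unitInterval) : ℝ) * (φ₂ t : V' → ℝ) v = (φ₂ t : V' → ℝ) v
    norm_num

/-! ### Support inclusions for the end maps -/

section SuppIncl

variable {f : VT A B C → ℝ}

lemma supp_mid_subset (h0 : ∀ v, 0 ≤ f v) :
    suppF (midFun XA XC b₀ f) ⊆ suppF f := by
  have hx0 : ∀ a, 0 ≤ xpart f a := fun a => h0 _
  have hz0 : ∀ c, 0 ≤ zpart f c := fun c => h0 _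
  have hpA : 0 ≤ min (alA XA b₀ f) (eps A C) :=
    le_min (alA_nonneg hx0) (le_of_lt eps_pos)
  have hpC : 0 ≤ min (alC XC b₀ f) (eps A C) :=
    le_min (alC_nonneg hz0) (le_of_lt eps_pos)
  intro v hv
  rw [mem_suppF] at hv ⊢
  rcases v with (a | b) | (b | c)
  · have : max (xpart f a - min (alA XA b₀ f) (eps A C)) 0 ≠ 0 := by
      intro h
      apply hv
      show max (xpart f a - min (alA XA b₀ f) (eps A C)) 0
        / midN XA XC b₀ f = 0
      rw [h, zero_div]
    have := max_ne_zero_iff.mp this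
    show xpart f a ≠ 0
    intro h
    rw [h] at this
    linarith
  · intro h
    apply hv
    show s1part f b / midN XA XC b₀ f = 0
    rw [show s1part f b = f (Sum.inl (Sum.inr b)) from rfl, h, zero_div]
  · intro h
    apply hv
    show s2part f b / midN XA XC b₀ f = 0
    rw [show s2part f b = f (Sum.inr (Sum.inl b)) from rfl, h, zero_div]
  · have : max (zpart f c - min (alC XC b₀ f) (eps A C)) 0 ≠ 0 := by
      intro h
      apply hv
      show max (zpart f c - min (alC XC b₀ f) (eps A C)) 0
        / midN XA XC b₀ f = 0
      rw [h, zero_div]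
    have := max_ne_zero_iff.mp this
    show zpart f c ≠ 0
    intro h
    rw [h] at this
    linarith

lemma supp_phi_psi_subset (h0 : ∀ v, 0 ≤ f v) :
    suppF (phiRaw b₀ (psiFun XA XC b₀ f)) ⊆ suppF f := by
  have hx0 : ∀ a, 0 ≤ xpart f a := fun a => h0 _
  have hz0 : ∀ c, 0 ≤ zpart f c := fun c => h0 _
  intro v hv
  rw [mem_suppF] at hv ⊢
  rcases v with (a | b) | (b | c)
  · -- A coordinate: the truncation shrinks the support
    have hne : max (xpart f a - min (alA XA b₀ f) (eps A C)) 0 ≠ 0 := by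
      intro h
      apply hv
      show max (xpart f a - min (alA XA b₀ f) (eps A C)) 0
        / psiN XA XC b₀ f = 0
      rw [h, zero_div]
    have hgt := max_ne_zero_iff.mp hne
    have hpA : 0 ≤ min (alA XA b₀ f) (eps A C) :=
      le_min (alA_nonneg hx0) (le_of_lt eps_pos)
    show xpart f a ≠ 0
    intro h
    rw [h] at hgt
    linarith
  · -- first B copy
    by_cases hbb : b = b₀
    · rw [hbb] at hv ⊢
      intro h
      apply hv
      show s1part (phiRaw b₀ (psiFun XA XC b₀ f)) b₀ = 0
      rw [s1part_phiRaw, if_pos rfl]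
      show s1part (psiRaw XA XC b₀ f) b₀ / psiN XA XC b₀ f
        + s2part (psiRaw XA XC b₀ f) b₀ / psiN XA XC b₀ f = 0
      rw [s1part_psiRaw, s2part_psiRaw, if_pos rfl, if_pos rfl]
      have hfb : s1part f b₀ = 0 := h
      rw [hfb]
      ring
    · intro h
      apply hv
      show s1part (phiRaw b₀ (psiFun XA XC b₀ f)) b = 0
      rw [s1part_phiRaw, if_neg hbb]
      show s1part (psiRaw XA XC b₀ f) b / psiN XA XC b₀ f = 0
      rw [s1part_psiRaw, if_neg hbb]
      have hfb : s1part f b = 0 := h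
      rw [hfb, zero_div]
  · -- second B copy
    by_cases hbb : b = b₀
    · exfalso
      apply hv
      show s2part (phiRaw b₀ (psiFun XA XC b₀ f)) b = 0
      rw [s2part_phiRaw, if_pos hbb]
    · intro h
      apply hv
      show s2part (phiRaw b₀ (psiFun XA XC b₀ f)) b = 0
      rw [s2part_phiRaw, if_neg hbb]
      show s2part (psiRaw XA XC b₀ f) b / psiN XA XC b₀ f = 0
      rw [s2part_psiRaw, if_neg hbb]
      have hfb : s2part f b = 0 := h
      rw [hfb, zero_div]
  · -- C coordinate
    have hne : max (zpart f c - min (alC XC b₀ f) (eps A C)) 0 ≠ 0 := by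
      intro h
      apply hv
      show max (zpart f c - min (alC XC b₀ f) (eps A C)) 0
        / psiN XA XC b₀ f = 0
      rw [h, zero_div]
    have hgt := max_ne_zero_iff.mp hne
    have hpC : 0 ≤ min (alC XC b₀ f) (eps A C) :=
      le_min (alC_nonneg hz0) (le_of_lt eps_pos)
    show zpart f c ≠ 0
    intro h
    rw [h] at hgt
    linarith

end SuppIncl

/-! ### The one-step homotopy equivalence -/

section Step

variable (M : Finset B)

noncomputable def phiCM :
    C(↥((ZC XA XC M).realization), ↥((ZC XA XC (insert b₀ M)).realization)) :=
  ⟨fun f => ⟨phiRaw b₀ (f : VT A B C → ℝ), phi_mem XA XC b₀ M f.2⟩,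
    Continuous.subtype_mk ((cont_phiRaw b₀).comp continuous_subtype_val) _⟩

lemma psiN_ne_zero_on {f : VT A B C → ℝ}
    (hf : f ∈ (ZC XA XC (insert b₀ M)).realization) : psiN XA XC b₀ f ≠ 0 :=
  ne_of_gt (psiN_pos XA XC b₀ ((mem_realization_iff _ _).mp hf).2.1
    (s2b0_eq_zero XA XC b₀ M hf))

lemma midN_ne_zero_on {f : VT A B C → ℝ}
    (hf : f ∈ (ZC XA XC M).realization) : midN XA XC b₀ f ≠ 0 :=
  ne_of_gt (midN_pos XA XC b₀ ((mem_realization_iff _ _).mp hf).2.1)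

noncomputable def psiCM (hb₀ : b₀ ∉ M) :
    C(↥((ZC XA XC (insert b₀ M)).realization), ↥((ZC XA XC M).realization)) :=
  ⟨fun f => ⟨psiFun XA XC b₀ (f : VT A B C → ℝ), psi_mem XA XC b₀ M hb₀ f.2⟩, by
    apply Continuous.subtype_mk
    apply continuous_pi
    intro v
    have hnum : Continuous fun f : ↥((ZC XA XC (insert b₀ M)).realization) =>
        psiRaw XA XC b₀ (f : VT A B C → ℝ) v :=
      (continuous_apply v).comp ((cont_psiRaw XA XC b₀).comp continuous_subtype_val)
    have hden : Continuous fun f : ↥((ZC XA XC (insert b₀ M)).realization) =>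
        psiN XA XC b₀ (f : VT A B C → ℝ) :=
      (cont_psiN XA XC b₀).comp continuous_subtype_val
    exact hnum.div hden (fun f => psiN_ne_zero_on XA XC b₀ M f.2)⟩

noncomputable def midCM (hb₀ : b₀ ∉ M) :
    C(↥((ZC XA XC M).realization), ↥((ZC XA XC M).realization)) :=
  ⟨fun f => ⟨midFun XA XC b₀ (f : VT A B C → ℝ), mid_mem XA XC b₀ M hb₀ f.2⟩, by
    apply Continuous.subtype_mk
    apply continuous_pi
    intro v
    have hnum : Continuous fun f : ↥((ZC XA XC M).realization) =>
        midRaw XA XC b₀ (f : VT A B C → ℝ) v :=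
      (continuous_apply v).comp ((cont_midRaw XA XC b₀).comp continuous_subtype_val)
    have hden : Continuous fun f : ↥((ZC XA XC M).realization) =>
        midN XA XC b₀ (f : VT A B C → ℝ) :=
      (cont_midN XA XC b₀).comp continuous_subtype_val
    exact hnum.div hden (fun f => midN_ne_zero_on XA XC b₀ M f.2)⟩

set_option maxHeartbeats 1000000 in
noncomputable def stepEquiv (hb₀ : b₀ ∉ M) :
    ContinuousMap.HomotopyEquiv ↥((ZC XA XC M).realization)
      ↥((ZC XA XC (insert b₀ M)).realization) where
  toFun := phiCM XA XC b₀ M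
  invFun := psiCM XA XC b₀ M hb₀
  left_inv := by
    -- id ≃ mid ≃ ψ ∘ φ
    have h1 : (ContinuousMap.id ↥((ZC XA XC M).realization)).Homotopy
        (midCM XA XC b₀ M hb₀) := by
      apply lineHomotopy
      intro t
      obtain ⟨h0, h1, hF⟩ := (mem_realization_iff _ _).mp t.2
      refine ⟨suppF (t : VT A B C → ℝ), hF, fun v hv => ?_⟩
      rcases hv with hv | hv
      · exact mem_suppF.mpr hv
      · exact supp_mid_subset XA XC b₀ h0 (mem_suppF.mpr hv)
    have h2 : (midCM XA XC b₀ M hb₀).Homotopy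
        ((psiCM XA XC b₀ M hb₀).comp (phiCM XA XC b₀ M)) := by
      apply lineHomotopy
      intro t
      refine ⟨_, union_face XA XC b₀ M hb₀ t.2, fun v hv => ?_⟩
      rcases hv with hv | hv
      · exact Finset.mem_union_left _ (mem_suppF.mpr hv)
      · exact Finset.mem_union_right _ (mem_suppF.mpr hv)
    exact ⟨(h1.trans h2).symm⟩
  right_inv := by
    have h1 : (ContinuousMap.id ↥((ZC XA XC (insert b₀ M)).realization)).Homotopy
        ((phiCM XA XC b₀ M).comp (psiCM XA XC b₀ M hb₀)) := by
      apply lineHomotopy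
      intro t
      obtain ⟨h0, h1, hF⟩ := (mem_realization_iff _ _).mp t.2
      refine ⟨suppF (t : VT A B C → ℝ), hF, fun v hv => ?_⟩
      rcases hv with hv | hv
      · exact mem_suppF.mpr hv
      · exact supp_phi_psi_subset XA XC b₀ h0 (mem_suppF.mpr hv)
    exact ⟨h1.symm⟩

end Step

/-! ### Iterating the one-step equivalence -/

lemma equiv_empty_to (M : Finset B) :
    Nonempty (ContinuousMap.HomotopyEquiv
      ↥((ZC XA XC (∅ : Finset B)).realization) ↥((ZC XA XC M).realization)) := by
  induction M using Finset.induction_on with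
  | empty => exact ⟨ContinuousMap.HomotopyEquiv.refl _⟩
  | insert _ _ h ih =>
    obtain ⟨e⟩ := ih
    exact ⟨e.trans (stepEquiv XA XC _ _ h)⟩

/-! ### Identification of `ZC ∅` with the join -/

lemma facesAB_char
    (hAB : ∀ N : Finset (A ⊕ B), N ∉ XA.faces →
      (∀ N' : Finset (A ⊕ B), N' ⊂ N → N' ∈ XA.faces) →
      (N.preimage Sum.inr Sum.inr_injective.injOn).card ≤ 1)
    (G : Finset (A ⊕ B)) :
    G ∈ XA.faces ↔
      mA (G.preimage Sum.inl Sum.inl_injective.injOn) ∈ XA.faces ∧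
      ∀ b ∈ G.preimage Sum.inr Sum.inr_injective.injOn,
        condA XA (G.preimage Sum.inl Sum.inl_injective.injOn) b := by
  constructor
  · intro hG
    constructor
    · apply XA.down_closed hG
      intro v hv
      rw [mA, Finset.mem_map] at hv
      obtain ⟨a, ha, rfl⟩ := hv
      exact Finset.mem_preimage.mp ha
    · intro b hb
      apply XA.down_closed hG
      rw [Finset.insert_subset_iff]
      refine ⟨Finset.mem_preimage.mp hb, ?_⟩
      intro v hv
      rw [mA, Finset.mem_map] at hv
      obtain ⟨a, ha, rfl⟩ := hv
      exact Finset.mem_preimage.mp ha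
  · rintro ⟨hA, hB⟩
    by_contra hG
    have hne : (G.powerset.filter (fun T => T ∉ XA.faces)).Nonempty :=
      ⟨G, Finset.mem_filter.mpr ⟨Finset.mem_powerset.mpr (Finset.Subset.refl G), hG⟩⟩
    obtain ⟨T, hT, hmin⟩ := Finset.exists_min_image _ Finset.card hne
    rw [Finset.mem_filter, Finset.mem_powerset] at hT
    obtain ⟨hTG, hTn⟩ := hT
    have hminface : ∀ T' : Finset (A ⊕ B), T' ⊂ T → T' ∈ XA.faces := by
      intro T' hss
      by_contra hT'
      have hmem : T' ∈ G.powerset.filter (fun T => T ∉ XA.faces) :=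
        Finset.mem_filter.mpr
          ⟨Finset.mem_powerset.mpr (hss.subset.trans hTG), hT'⟩
      exact absurd (Finset.card_lt_card hss) (not_lt.mpr (hmin T' hmem))
    have hcard := hAB T hTn hminface
    by_cases hTB : T.preimage Sum.inr Sum.inr_injective.injOn = ∅
    · apply hTn
      apply XA.down_closed hA
      intro v hv
      cases v with
      | inl a =>
        rw [mA, Finset.mem_map]
        exact ⟨a, Finset.mem_preimage.mpr (hTG hv), rfl⟩
      | inr b =>
        exfalso
        have : b ∈ T.preimage Sum.inr Sum.inr_injective.injOn :=
          Finset.mem_preimage.mpr hv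
        rw [hTB] at this
        exact Finset.notMem_empty b this
    · obtain ⟨b, hb⟩ := Finset.nonempty_iff_ne_empty.mpr hTB
      have hbG : b ∈ G.preimage Sum.inr Sum.inr_injective.injOn :=
        Finset.mem_preimage.mpr (hTG (Finset.mem_preimage.mp hb))
      apply hTn
      apply XA.down_closed (hB b hbG)
      intro v hv
      cases v with
      | inl a =>
        apply Finset.mem_insert_of_mem
        rw [mA, Finset.mem_map]
        exact ⟨a, Finset.mem_preimage.mpr (hTG hv), rfl⟩
      | inr b' =>
        have hb' : b' ∈ T.preimage Sum.inr Sum.inr_injective.injOn :=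
          Finset.mem_preimage.mpr hv
        have : b' = b := Finset.card_le_one.mp hcard b' hb' b hb
        rw [this]
        exact Finset.mem_insert_self _ _

lemma facesBC_char
    (hBC : ∀ N : Finset (B ⊕ C), N ∉ XC.faces →
      (∀ N' : Finset (B ⊕ C), N' ⊂ N → N' ∈ XC.faces) →
      (N.preimage Sum.inl Sum.inl_injective.injOn).card ≤ 1)
    (G : Finset (B ⊕ C)) :
    G ∈ XC.faces ↔
      mC (G.preimage Sum.inr Sum.inr_injective.injOn) ∈ XC.faces ∧
      ∀ b ∈ G.preimage Sum.inl Sum.inl_injective.injOn,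
        condC XC (G.preimage Sum.inr Sum.inr_injective.injOn) b := by
  constructor
  · intro hG
    constructor
    · apply XC.down_closed hG
      intro v hv
      rw [mC, Finset.mem_map] at hv
      obtain ⟨c, hc, rfl⟩ := hv
      exact Finset.mem_preimage.mp hc
    · intro b hb
      apply XC.down_closed hG
      rw [Finset.insert_subset_iff]
      refine ⟨Finset.mem_preimage.mp hb, ?_⟩
      intro v hv
      rw [mC, Finset.mem_map] at hv
      obtain ⟨c, hc, rfl⟩ := hv
      exact Finset.mem_preimage.mp hc
  · rintro ⟨hC, hB⟩
    by_contra hG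
    have hne : (G.powerset.filter (fun T => T ∉ XC.faces)).Nonempty :=
      ⟨G, Finset.mem_filter.mpr ⟨Finset.mem_powerset.mpr (Finset.Subset.refl G), hG⟩⟩
    obtain ⟨T, hT, hmin⟩ := Finset.exists_min_image _ Finset.card hne
    rw [Finset.mem_filter, Finset.mem_powerset] at hT
    obtain ⟨hTG, hTn⟩ := hT
    have hminface : ∀ T' : Finset (B ⊕ C), T' ⊂ T → T' ∈ XC.faces := by
      intro T' hss
      by_contra hT'
      have hmem : T' ∈ G.powerset.filter (fun T => T ∉ XC.faces) :=
        Finset.mem_filter.mpr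
          ⟨Finset.mem_powerset.mpr (hss.subset.trans hTG), hT'⟩
      exact absurd (Finset.card_lt_card hss) (not_lt.mpr (hmin T' hmem))
    have hcard := hBC T hTn hminface
    by_cases hTB : T.preimage Sum.inl Sum.inl_injective.injOn = ∅
    · apply hTn
      apply XC.down_closed hC
      intro v hv
      cases v with
      | inr c =>
        rw [mC, Finset.mem_map]
        exact ⟨c, Finset.mem_preimage.mpr (hTG hv), rfl⟩
      | inl b =>
        exfalso
        have : b ∈ T.preimage Sum.inl Sum.inl_injective.injOn :=
          Finset.mem_preimage.mpr hv
        rw [hTB] at this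
        exact Finset.notMem_empty b this
    · obtain ⟨b, hb⟩ := Finset.nonempty_iff_ne_empty.mpr hTB
      have hbG : b ∈ G.preimage Sum.inl Sum.inl_injective.injOn :=
        Finset.mem_preimage.mpr (hTG (Finset.mem_preimage.mp hb))
      apply hTn
      apply XC.down_closed (hB b hbG)
      intro v hv
      cases v with
      | inr c =>
        apply Finset.mem_insert_of_mem
        rw [mC, Finset.mem_map]
        exact ⟨c, Finset.mem_preimage.mpr (hTG hv), rfl⟩
      | inl b' =>
        have hb' : b' ∈ T.preimage Sum.inl Sum.inl_injective.injOn :=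
          Finset.mem_preimage.mpr hv
        have : b' = b := Finset.card_le_one.mp hcard b' hb' b hb
        rw [this]
        exact Finset.mem_insert_self _ _

lemma join_faces_eq
    (hAB : ∀ N : Finset (A ⊕ B), N ∉ XA.faces →
      (∀ N' : Finset (A ⊕ B), N' ⊂ N → N' ∈ XA.faces) →
      (N.preimage Sum.inr Sum.inr_injective.injOn).card ≤ 1)
    (hBC : ∀ N : Finset (B ⊕ C), N ∉ XC.faces →
      (∀ N' : Finset (B ⊕ C), N' ⊂ N → N' ∈ XC.faces) →
      (N.preimage Sum.inl Sum.inl_injective.injOn).card ≤ 1) :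
    (SComplex.join XA XC).faces = (ZC XA XC (∅ : Finset B)).faces := by
  ext F
  have e1 : (F.preimage Sum.inl Sum.inl_injective.injOn).preimage
      Sum.inl Sum.inl_injective.injOn = pA F := by
    ext a; simp
  have e2 : (F.preimage Sum.inl Sum.inl_injective.injOn).preimage
      Sum.inr Sum.inr_injective.injOn = p1 F := by
    ext b; simp
  have e3 : (F.preimage Sum.inr Sum.inr_injective.injOn).preimage
      Sum.inl Sum.inl_injective.injOn = p2 F := by
    ext b; simp
  have e4 : (F.preimage Sum.inr Sum.inr_injective.injOn).preimage
      Sum.inr Sum.inr_injective.injOn = pC F := by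
    ext c; simp
  show (F.preimage Sum.inl Sum.inl_injective.injOn ∈ XA.faces ∧
      F.preimage Sum.inr Sum.inr_injective.injOn ∈ XC.faces) ↔ _
  rw [facesAB_char XA hAB, facesBC_char XC hBC, e1, e2, e3, e4]
  show _ ↔ (mA (pA F) ∈ XA.faces ∧ mC (pC F) ∈ XC.faces ∧
    (∀ b ∈ p1 F, condA XA (pA F) b ∨ (b ∈ (∅ : Finset B) ∧ condC XC (pC F) b)) ∧
    (∀ b ∈ p2 F, b ∉ (∅ : Finset B) ∧ condC XC (pC F) b))
  constructor
  · rintro ⟨⟨h1, h2⟩, ⟨h3, h4⟩⟩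
    exact ⟨h1, h3, fun b hb => Or.inl (h2 b hb),
      fun b hb => ⟨Finset.notMem_empty b, h4 b hb⟩⟩
  · rintro ⟨h1, h3, h2, h4⟩
    refine ⟨⟨h1, fun b hb => ?_⟩, ⟨h3, fun b hb => (h4 b hb).2⟩⟩
    rcases h2 b hb with h | ⟨hfalse, _⟩
    · exact h
    · exact absurd hfalse (Finset.notMem_empty b)

/-! ### Identification of `ZC univ` with the glued complex -/

def toG (f : VT A B C → ℝ) : (A ⊕ B ⊕ C) → ℝ
  | Sum.inl a => f (Sum.inl (Sum.inl a))
  | Sum.inr (Sum.inl b) => f (Sum.inl (Sum.inr b)) + f (Sum.inr (Sum.inl b))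
  | Sum.inr (Sum.inr c) => f (Sum.inr (Sum.inr c))

def fromG (g : (A ⊕ B ⊕ C) → ℝ) : VT A B C → ℝ
  | Sum.inl (Sum.inl a) => g (Sum.inl a)
  | Sum.inl (Sum.inr b) => g (Sum.inr (Sum.inl b))
  | Sum.inr (Sum.inl _) => 0
  | Sum.inr (Sum.inr c) => g (Sum.inr (Sum.inr c))

lemma s2_vanish {f : VT A B C → ℝ}
    (hf : f ∈ (ZC XA XC (univ : Finset B)).realization) (b : B) :
    s2part f b = 0 := by
  rw [mem_ZC_iff] at hf
  by_contra h
  exact (hf.2.2.2.2.2 b h).1 (mem_univ b)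

lemma sum_toG (f : VT A B C → ℝ) : ∑ w, toG f w = ∑ v, f v := by
  rw [sumVT]
  rw [Fintype.sum_sum_type, Fintype.sum_sum_type]
  show (∑ a, f (Sum.inl (Sum.inl a))) +
    ((∑ b, (f (Sum.inl (Sum.inr b)) + f (Sum.inr (Sum.inl b)))) +
      ∑ c, f (Sum.inr (Sum.inr c))) = _
  rw [Finset.sum_add_distrib]
  unfold xpart s1part s2part zpart
  ring

lemma sum_fromG (g : (A ⊕ B ⊕ C) → ℝ) : ∑ v, fromG (A := A) (B := B) (C := C) g v = ∑ w, g w := by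
  rw [sumVT]
  rw [Fintype.sum_sum_type, Fintype.sum_sum_type]
  unfold xpart s1part s2part zpart
  show _ = (∑ a, g (Sum.inl a)) +
    ((∑ b, g (Sum.inr (Sum.inl b))) + ∑ c, g (Sum.inr (Sum.inr c)))
  show (∑ a, g (Sum.inl a)) + (∑ b, g (Sum.inr (Sum.inl b)))
    + (∑ _b : B, (0:ℝ)) + (∑ c, g (Sum.inr (Sum.inr c))) = _
  rw [Finset.sum_const]
  simp
  ring

lemma toG_mem {f : VT A B C → ℝ}
    (hf : f ∈ (ZC XA XC (univ : Finset B)).realization) :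
    toG f ∈ (glueComplex XA XC).realization := by
  have hvan : ∀ b, s2part f b = 0 := s2_vanish XA XC hf
  rw [mem_ZC_iff] at hf
  obtain ⟨h0, h1, hfA, hfC, hs1, hs2⟩ := hf
  rw [mem_realization_iff]
  have eA : aPart (suppF (toG f)) = suppF (xpart f) := by
    ext a
    simp only [aPart, Finset.mem_preimage, mem_suppF]
    rfl
  have eC : cPart (suppF (toG f)) = suppF (zpart f) := by
    ext c
    simp only [cPart, Finset.mem_preimage, mem_suppF]
    rfl
  have eB : bPart (suppF (toG f)) = suppF (s1part f) := by
    ext b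
    simp only [bPart, Finset.mem_preimage, mem_suppF]
    show toG f (Sum.inr (Sum.inl b)) ≠ 0 ↔ _
    show s1part f b + s2part f b ≠ 0 ↔ _
    rw [hvan b, add_zero]
  refine ⟨?_, ?_, ?_, ?_, ?_⟩
  · intro w
    rcases w with a | (b | c)
    · exact h0 _
    · exact add_nonneg (h0 _) (h0 _)
    · exact h0 _
  · rw [sum_toG, h1]
  · rw [eA]
    exact hfA
  · rw [eC]
    exact hfC
  · intro b hb
    rw [eA, eC]
    rw [eB, mem_suppF] at hb
    rcases hs1 b hb with hc | ⟨_, hc⟩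
    · exact Or.inl hc
    · exact Or.inr hc

lemma fromG_mem {g : (A ⊕ B ⊕ C) → ℝ}
    (hg : g ∈ (glueComplex XA XC).realization) :
    fromG g ∈ (ZC XA XC (univ : Finset B)).realization := by
  rw [mem_realization_iff] at hg
  obtain ⟨h0, h1, hF⟩ := hg
  obtain ⟨hfA, hfC, hb⟩ := hF
  rw [mem_ZC_iff]
  have eA : suppF (xpart (fromG g)) = aPart (suppF g) := by
    ext a
    simp only [aPart, Finset.mem_preimage, mem_suppF]
    rfl
  have eC : suppF (zpart (fromG g)) = cPart (suppF g) := by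
    ext c
    simp only [cPart, Finset.mem_preimage, mem_suppF]
    rfl
  refine ⟨?_, ?_, ?_, ?_, ?_, ?_⟩
  · intro v
    rcases v with (a | b) | (b | c)
    · exact h0 _
    · exact h0 _
    · exact le_refl 0
    · exact h0 _
  · rw [sum_fromG, h1]
  · rw [eA]
    exact hfA
  · rw [eC]
    exact hfC
  · intro b hbne
    rw [eA, eC]
    have hbmem : b ∈ bPart (suppF g) := by
      simp only [bPart, Finset.mem_preimage, mem_suppF]
      exact hbne
    rcases hb b hbmem with hc | hc
    · exact Or.inl hc
    · exact Or.inr ⟨mem_univ b, hc⟩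
  · intro b hbne
    exact absurd rfl hbne

lemma cont_toG : Continuous (toG : (VT A B C → ℝ) → (A ⊕ B ⊕ C) → ℝ) := by
  apply continuous_pi
  intro w
  rcases w with a | (b | c)
  · exact continuous_apply _
  · exact (continuous_apply _).add (continuous_apply _)
  · exact continuous_apply _

lemma cont_fromG : Continuous (fromG : ((A ⊕ B ⊕ C) → ℝ) → VT A B C → ℝ) := by
  apply continuous_pi
  intro v
  rcases v with (a | b) | (b | c)
  · exact continuous_apply _
  · exact continuous_apply _
  · exact continuous_const
  · exact continuous_apply _

noncomputable def glueHomeo :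
    ↥((ZC XA XC (univ : Finset B)).realization) ≃ₜ
      ↥((glueComplex XA XC).realization) where
  toFun := fun f => ⟨toG (f : VT A B C → ℝ), toG_mem XA XC f.2⟩
  invFun := fun g => ⟨fromG (g : (A ⊕ B ⊕ C) → ℝ), fromG_mem XA XC g.2⟩
  left_inv := by
    intro f
    apply Subtype.ext
    funext v
    have hvan : ∀ b, s2part (f : VT A B C → ℝ) b = 0 := s2_vanish XA XC f.2
    show fromG (toG (f : VT A B C → ℝ)) v = (f : VT A B C → ℝ) v
    rcases v with (a | b) | (b | c)
    · rfl
    · show toG (f : VT A B C → ℝ) (Sum.inr (Sum.inl b)) = _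
      show s1part (f : VT A B C → ℝ) b + s2part (f : VT A B C → ℝ) b = _
      rw [hvan b, add_zero]
      rfl
    · show (0:ℝ) = (f : VT A B C → ℝ) (Sum.inr (Sum.inl b))
      exact (hvan b).symm
    · rfl
  right_inv := by
    intro g
    apply Subtype.ext
    funext w
    show toG (fromG (g : (A ⊕ B ⊕ C) → ℝ)) w = (g : (A ⊕ B ⊕ C) → ℝ) w
    rcases w with a | (b | c)
    · rfl
    · show fromG (g : (A ⊕ B ⊕ C) → ℝ) (Sum.inl (Sum.inr b))
        + fromG (g : (A ⊕ B ⊕ C) → ℝ) (Sum.inr (Sum.inl b)) = _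
      show (g : (A ⊕ B ⊕ C) → ℝ) (Sum.inr (Sum.inl b)) + 0 = _
      rw [add_zero]
    · rfl
  continuous_toFun :=
    Continuous.subtype_mk ((cont_toG).comp continuous_subtype_val) _
  continuous_invFun :=
    Continuous.subtype_mk ((cont_fromG).comp continuous_subtype_val) _

end Main

end S4

/-- Let `X_{AB}` and `X_{BC}` be simplicial complexes on
`A ∪ B` and `B ∪ C` such that no minimal nonface (= minimal generator of the
Stanley–Reisner ideal) contains two vertices of `B`.  Then the join
`X_{AB'} * X_{B''C}` (on two disjoint copies of `B`) is homotopy equivalent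
to the glued complex `X` described above. -/
theorem statement_4 {A B C : Type u} [Fintype A] [Fintype B] [Fintype C]
    (XA : SComplex (A ⊕ B)) (XC : SComplex (B ⊕ C))
    (hAB : ∀ N : Finset (A ⊕ B), N ∉ XA.faces →
      (∀ N' : Finset (A ⊕ B), N' ⊂ N → N' ∈ XA.faces) →
      (N.preimage Sum.inr Sum.inr_injective.injOn).card ≤ 1)
    (hBC : ∀ N : Finset (B ⊕ C), N ∉ XC.faces →
      (∀ N' : Finset (B ⊕ C), N' ⊂ N → N' ∈ XC.faces) →
      (N.preimage Sum.inl Sum.inl_injective.injOn).card ≤ 1) :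
    SComplex.HEquiv (SComplex.join XA XC) (glueComplex XA XC) := by
  have h0 : (SComplex.join XA XC).realization =
      (S4.ZC XA XC (∅ : Finset B)).realization :=
    S4.realization_congr (S4.join_faces_eq XA XC hAB hBC)
  obtain ⟨e⟩ := S4.equiv_empty_to XA XC (Finset.univ : Finset B)
  exact ⟨((Homeomorph.setCongr h0).toHomotopyEquiv).trans
    (e.trans (S4.glueHomeo XA XC).toHomotopyEquiv)⟩

end
end

section
/- Let G be a graph whose vertex set is a disjoint union A_0 ∪ A_1 ∪ ··· ∪ A_n and each of whose edges joins a vertex of A_{i−1} to a vertex of A_i for some i. For i = 1, …, n, let X_i be the simplicial complex on A_{i−1} ∪ A_i whose Stanley–Reisner ideal is the edge ideal of the bipartite graph of edges between A_{i−1} and A_i. Let X be the simplicial complex on A_0 ∪ ··· ∪ A_n whose Stanley–Reisner ideal is generated by the monomials x_{a_0} x_{a_1} ··· x_{a_n} with a_i ∈ A_i and {a_{i−1}, a_i} an edge of G for every i. Then X is homotopy equivalent to the join X_1 * X_2 * ··· * X_n. -/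
/-!
Common infrastructure: abstract simplicial complexes, geometric realization,
homotopy equivalence, reduced simplicial cohomology, squarefree monomial ideals
(encoded as upward closed families of finite sets), Koszul-complex multigraded
Betti numbers, and letterplace ideals of posets.
-/

noncomputable section

open Finset

attribute [local instance] Classical.propDecidable

universe u v w

/-- The simplicial complex on `A₀ ∪ ⋯ ∪ Aₙ` whose Stanley–Reisner ideal is
generated by the monomials `x_{a₀} x_{a₁} ⋯ x_{aₙ}` with `aᵢ ∈ Aᵢ` and
`{a_{i-1}, a_i}` an edge for every `i`; its faces are the sets containing no
full edge path from `A₀` to `Aₙ`. -/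
def pathComplex (n : ℕ) (A : Fin (n + 1) → Type u)
    (E : ∀ i : Fin n, A i.castSucc → A i.succ → Prop) : SComplex (Σ i, A i) where
  faces := {F | ¬ ∃ a : ∀ i, A i,
    (∀ i : Fin n, E i (a i.castSucc) (a i.succ)) ∧
    ∀ i, (⟨i, a i⟩ : Σ j, A j) ∈ F}
  down_closed := by
    rintro F G hF hGF ⟨a, hE, hm⟩
    exact hF ⟨a, hE, fun i => hGF (hm i)⟩

/-! ### Proof of Statement 5 -/

namespace Statement5

variable {m : ℕ} {A : Fin (m + 2) → Type u}

/-- The vertex-merging map from the vertex set of the join to that of the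
path complex. -/
def mu (w : Σ i : Fin (m + 1), (A i.castSucc ⊕ A i.succ)) : Σ j : Fin (m + 2), A j :=
  Sum.rec (fun a => ⟨w.1.castSucc, a⟩) (fun b => ⟨w.1.succ, b⟩) w.2

@[simp] lemma mu_inl (i : Fin (m + 1)) (a : A i.castSucc) :
    mu ⟨i, Sum.inl a⟩ = ⟨i.castSucc, a⟩ := rfl

@[simp] lemma mu_inr (i : Fin (m + 1)) (b : A i.succ) :
    mu ⟨i, Sum.inr b⟩ = ⟨i.succ, b⟩ := rfl

-- defeq sanity checks
example (k : ℕ) (h : k < m + 1) :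
    (Fin.castSucc (⟨k, h⟩ : Fin (m + 1))) = ⟨k, by omega⟩ := rfl
example (k : ℕ) (h : k < m + 1) :
    (Fin.succ (⟨k, h⟩ : Fin (m + 1))) = ⟨k + 1, by omega⟩ := rfl

variable (E : ∀ i : Fin (m + 1), A i.castSucc → A i.succ → Prop)

/-- The conflict relation: the two endpoints of an edge of one of the
bipartite graphs. -/
def conf (w w' : Σ i : Fin (m + 1), (A i.castSucc ⊕ A i.succ)) : Prop :=
  ∃ (i : Fin (m + 1)) (a : A i.castSucc) (b : A i.succ), E i a b ∧
    ((w = ⟨i, Sum.inl a⟩ ∧ w' = ⟨i, Sum.inr b⟩) ∨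
     (w = ⟨i, Sum.inr b⟩ ∧ w' = ⟨i, Sum.inl a⟩))

lemma conf_symm {w w'} (h : conf E w w') : conf E w' w := by
  obtain ⟨i, a, b, hE, h | h⟩ := h
  · exact ⟨i, a, b, hE, Or.inr ⟨h.2, h.1⟩⟩
  · exact ⟨i, a, b, hE, Or.inl ⟨h.2, h.1⟩⟩

variable [∀ i, Fintype (A i)]

/-- Combined weight of a vertex: sum of the weights of its copies. -/
def comb (g : (Σ i : Fin (m + 1), (A i.castSucc ⊕ A i.succ)) → ℝ)
    (v : Σ j : Fin (m + 2), A j) : ℝ :=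
  ∑ w ∈ Finset.univ.filter (fun w => mu w = v), g w

/-- Number of copies of a vertex. -/
def cnt (v : Σ j : Fin (m + 2), A j) : ℕ :=
  (Finset.univ.filter (fun w => mu (A := A) w = v)).card

/-- Even split of a weight function on vertices onto the copies. -/
def spl (f : (Σ j : Fin (m + 2), A j) → ℝ)
    (w : Σ i : Fin (m + 1), (A i.castSucc ⊕ A i.succ)) : ℝ :=
  f (mu w) / cnt (mu w)

/-- Total conflicting weight at a copy. -/
def SS (g : (Σ i : Fin (m + 1), (A i.castSucc ⊕ A i.succ)) → ℝ)
    (w : Σ i : Fin (m + 1), (A i.castSucc ⊕ A i.succ)) : ℝ :=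
  ∑ w' ∈ Finset.univ.filter (fun w' => conf E w w'), g w'

/-- The conflict-cancellation map. -/
def UU (g : (Σ i : Fin (m + 1), (A i.castSucc ⊕ A i.succ)) → ℝ)
    (w : Σ i : Fin (m + 1), (A i.castSucc ⊕ A i.succ)) : ℝ :=
  max (g w - SS E g w) 0

lemma SS_nonneg {g} (hg : ∀ w, 0 ≤ g w) (w) : 0 ≤ SS E g w :=
  Finset.sum_nonneg fun w' _ => hg w'

lemma UU_nonneg (g w) : 0 ≤ UU E g w := le_max_right _ _

lemma UU_le {g} (hg : ∀ w, 0 ≤ g w) (w) : UU E g w ≤ g w := by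
  have := SS_nonneg E hg w
  have : g w - SS E g w ≤ g w := by linarith
  exact max_le this (hg w)

lemma UU_pos_iff {g w} : 0 < UU E g w ↔ SS E g w < g w := by
  unfold UU
  constructor
  · intro h
    by_contra hc
    push_neg at hc
    rw [max_eq_right (by linarith)] at h
    exact lt_irrefl _ h
  · intro h
    calc (0:ℝ) < g w - SS E g w := by linarith
    _ ≤ max (g w - SS E g w) 0 := le_max_left _ _

lemma le_SS_of_conf {g} (hg : ∀ w, 0 ≤ g w) {w w'} (h : conf E w w') :
    g w' ≤ SS E g w :=
  Finset.single_le_sum (fun x _ => hg x)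
    (Finset.mem_filter.2 ⟨Finset.mem_univ _, h⟩)

/-- Exactness of the cancellation: no conflict pair survives. -/
lemma UU_exact {g} (hg : ∀ w, 0 ≤ g w) {w w'} (h : conf E w w')
    (h1 : 0 < UU E g w) (h2 : 0 < UU E g w') : False := by
  rw [UU_pos_iff] at h1 h2
  have a1 := le_SS_of_conf E hg h
  have a2 := le_SS_of_conf E hg (conf_symm E h)
  linarith

lemma sigma_mk_cast_eq {j j' : Fin (m + 2)} (e : j = j') (x : A j') :
    (⟨j, cast (congrArg A e.symm) x⟩ : Σ j : Fin (m + 2), A j) = ⟨j', x⟩ := by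
  subst e; rfl

lemma cnt_pos (v : Σ j : Fin (m + 2), A j) : 0 < cnt (A := A) v := by
  rw [cnt, Finset.card_pos]
  obtain ⟨j, x⟩ := v
  rcases lt_or_ge (j : ℕ) (m + 1) with h | h
  · refine ⟨⟨⟨(j : ℕ), h⟩, Sum.inl ?_⟩, ?_⟩
    · exact x
    · simp only [Finset.mem_filter, Finset.mem_univ, true_and, mu_inl]
      rfl
  · have hj1 : 1 ≤ (j : ℕ) := by omega
    have hj : (j : ℕ) = m + 1 := by omega
    have hlt : (j : ℕ) - 1 < m + 1 := by omega
    have he : (Fin.succ (⟨(j : ℕ) - 1, hlt⟩ : Fin (m + 1))) = j := by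
      apply Fin.ext; simp; omega
    refine ⟨⟨⟨(j : ℕ) - 1, hlt⟩, Sum.inr (cast (congrArg A he.symm) x)⟩, ?_⟩
    simp only [Finset.mem_filter, Finset.mem_univ, true_and, mu_inr]
    exact sigma_mk_cast_eq he x

lemma cnt_ne (v : Σ j : Fin (m + 2), A j) : (cnt (A := A) v : ℝ) ≠ 0 := by
  have h := cnt_pos (A := A) v
  exact_mod_cast h.ne' 

lemma sum_comb (g : (Σ i : Fin (m + 1), (A i.castSucc ⊕ A i.succ)) → ℝ) :
    ∑ v, comb g v = ∑ w, g w :=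
  Finset.sum_fiberwise_of_maps_to (fun w _ => Finset.mem_univ (mu w)) g

lemma comb_nonneg {g} (hg : ∀ w, 0 ≤ g w) (v) : 0 ≤ comb (A := A) g v :=
  Finset.sum_nonneg fun w _ => hg w

lemma self_le_comb {g} (hg : ∀ w, 0 ≤ g w) (w) : g w ≤ comb (A := A) g (mu w) :=
  Finset.single_le_sum (fun x _ => hg x)
    (Finset.mem_filter.2 ⟨Finset.mem_univ _, rfl⟩)

lemma comb_pos_of_ne {g} (hg : ∀ w, 0 ≤ g w) {v} (h : comb (A := A) g v ≠ 0) :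
    ∃ w, mu w = v ∧ g w ≠ 0 := by
  by_contra hc
  push_neg at hc
  apply h
  apply Finset.sum_eq_zero
  intro w hw
  exact hc w (Finset.mem_filter.1 hw).2

lemma comb_spl (f : (Σ j : Fin (m + 2), A j) → ℝ) (v) :
    comb (A := A) (spl f) v = f v := by
  unfold comb spl
  rw [Finset.sum_congr rfl (g := fun _ => f v / cnt v)
    (fun w hw => by rw [(Finset.mem_filter.1 hw).2])]
  rw [Finset.sum_const]
  rw [nsmul_eq_mul]
  rw [show (Finset.univ.filter (fun w => mu (A := A) w = v)).card = cnt v from rfl]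
  rw [mul_comm, div_mul_cancel₀ _ (cnt_ne v)]

lemma sum_spl (f : (Σ j : Fin (m + 2), A j) → ℝ) :
    ∑ w, spl (A := A) f w = ∑ v, f v := by
  rw [← sum_comb (spl f)]
  exact Finset.sum_congr rfl fun v _ => comb_spl f v

lemma spl_nonneg {f} (hf : ∀ v, 0 ≤ f v) (w) : 0 ≤ spl (A := A) f w := by
  unfold spl
  have h : (0:ℝ) < (cnt (A := A) (mu w) : ℝ) := by exact_mod_cast cnt_pos (A := A) (mu w)
  exact div_nonneg (hf _) h.le

lemma spl_pos {f : (Σ j : Fin (m + 2), A j) → ℝ} {w} (hf : 0 < f (mu w)) :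
    0 < spl (A := A) f w := by
  unfold spl
  have h := cnt_pos (A := A) (mu w)
  have h2 : (0:ℝ) < (cnt (A := A) (mu w) : ℝ) := by exact_mod_cast h
  exact div_pos hf h2

lemma face_not_conf {F : Finset (Σ i : Fin (m + 1), (A i.castSucc ⊕ A i.succ))}
    (hF : F ∈ (SComplex.bigJoin fun i => bipIndep (E i)).faces)
    {w w'} (hw : w ∈ F) (hw' : w' ∈ F) (hc : conf E w w') : False := by
  obtain ⟨i, a, b, hE, h | h⟩ := hc
  · obtain ⟨rfl, rfl⟩ := h
    exact hF i a b (Finset.mem_preimage.2 hw) (Finset.mem_preimage.2 hw') hE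
  · obtain ⟨rfl, rfl⟩ := h
    exact hF i a b (Finset.mem_preimage.2 hw') (Finset.mem_preimage.2 hw) hE

lemma image_face {F : Finset (Σ i : Fin (m + 1), (A i.castSucc ⊕ A i.succ))}
    (hF : F ∈ (SComplex.bigJoin fun i => bipIndep (E i)).faces) :
    F.image mu ∈ (pathComplex (m + 1) A E).faces := by
  intro hpath
  obtain ⟨a, hedge, hmem⟩ := hpath
  have claim : ∀ k : ℕ, ∀ hk : k < m + 1,
      (⟨⟨k, hk⟩, Sum.inl (a (Fin.castSucc ⟨k, hk⟩))⟩ :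
        Σ i : Fin (m + 1), (A i.castSucc ⊕ A i.succ)) ∈ F := by
    intro k
    induction k with
    | zero =>
      intro hk
      obtain ⟨w, hwF, hmu⟩ := Finset.mem_image.1 (hmem (Fin.castSucc ⟨0, hk⟩))
      obtain ⟨i', x | y⟩ := w
      · rw [mu_inl] at hmu
        obtain ⟨h1, h2⟩ := Sigma.mk.inj_iff.mp hmu
        have hi : i' = ⟨0, hk⟩ := Fin.castSucc_injective _ h1
        subst hi
        rwa [eq_of_heq h2] at hwF
      · rw [mu_inr] at hmu
        obtain ⟨h1, h2⟩ := Sigma.mk.inj_iff.mp hmu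
        have hval := congrArg Fin.val h1
        simp [Fin.val_succ] at hval
    | succ k ih =>
      intro hk
      have hk' : k < m + 1 := by omega
      have hprev := ih hk'
      obtain ⟨w, hwF, hmu⟩ := Finset.mem_image.1 (hmem (Fin.succ ⟨k, hk'⟩))
      obtain ⟨i', x | y⟩ := w
      · rw [mu_inl] at hmu
        obtain ⟨h1, h2⟩ := Sigma.mk.inj_iff.mp hmu
        have hival : (i' : ℕ) = k + 1 := by
          have := congrArg Fin.val h1; simpa using this
        have hi : i' = ⟨k + 1, hk⟩ := Fin.ext hival
        subst hi
        rwa [eq_of_heq h2] at hwF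
      · rw [mu_inr] at hmu
        obtain ⟨h1, h2⟩ := Sigma.mk.inj_iff.mp hmu
        have hival : (i' : ℕ) = k := by
          have := congrArg Fin.val h1; simpa using this
        have hi : i' = ⟨k, hk'⟩ := Fin.ext hival
        subst hi
        exfalso
        refine face_not_conf E hF hprev hwF ?_
        exact ⟨⟨k, hk'⟩, a (Fin.castSucc ⟨k, hk'⟩), a (Fin.succ ⟨k, hk'⟩),
          hedge ⟨k, hk'⟩, Or.inl ⟨rfl, by rw [eq_of_heq h2]⟩⟩
  have hm : m < m + 1 := by omega
  have hlast := claim m hm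
  obtain ⟨w, hwF, hmu⟩ := Finset.mem_image.1 (hmem (Fin.succ ⟨m, hm⟩))
  obtain ⟨i', x | y⟩ := w
  · rw [mu_inl] at hmu
    obtain ⟨h1, h2⟩ := Sigma.mk.inj_iff.mp hmu
    have hval := congrArg Fin.val h1
    simp [Fin.val_succ] at hval
    omega
  · rw [mu_inr] at hmu
    obtain ⟨h1, h2⟩ := Sigma.mk.inj_iff.mp hmu
    have hival : (i' : ℕ) = m := by
      have := congrArg Fin.val h1; simpa using this
    have hi : i' = ⟨m, hm⟩ := Fin.ext hival
    subst hi
    refine face_not_conf E hF hlast hwF ?_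
    exact ⟨⟨m, hm⟩, a (Fin.castSucc ⟨m, hm⟩), a (Fin.succ ⟨m, hm⟩),
      hedge ⟨m, hm⟩, Or.inl ⟨rfl, by rw [eq_of_heq h2]⟩⟩

lemma UU_supp_face {g} (hg : ∀ w, 0 ≤ g w) :
    (Finset.univ.filter fun w => UU E g w ≠ 0) ∈
      (SComplex.bigJoin fun i => bipIndep (E i)).faces := by
  intro i aa bb ha hb hE
  rw [Finset.mem_preimage, Finset.mem_filter] at ha hb
  have h1 : 0 < UU E g ⟨i, Sum.inl aa⟩ := (UU_nonneg E g _).lt_of_ne (Ne.symm ha.2)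
  have h2 : 0 < UU E g ⟨i, Sum.inr bb⟩ := (UU_nonneg E g _).lt_of_ne (Ne.symm hb.2)
  exact UU_exact E hg ⟨i, aa, bb, hE, Or.inl ⟨rfl, rfl⟩⟩ h1 h2

lemma UU_eq_self {g} (hg : ∀ w, 0 ≤ g w)
    {F} (hF : F ∈ (SComplex.bigJoin fun i => bipIndep (E i)).faces)
    (hsupp : ∀ w, g w ≠ 0 → w ∈ F) : UU E g = g := by
  funext w
  rcases eq_or_ne (g w) 0 with h0 | h0
  · rw [UU, h0]
    have := SS_nonneg E hg w
    rw [max_eq_right (by linarith)]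
  · have hS : SS E g w = 0 := by
      apply Finset.sum_eq_zero
      intro w' hw'
      by_contra hne
      exact face_not_conf E hF (hsupp w h0) (hsupp w' hne) (Finset.mem_filter.1 hw').2
    rw [UU, hS, sub_zero, max_eq_left (hg w)]

/-- Building a full path through layers from a step relation. -/
lemma exists_path (P : ∀ j : Fin (m + 2), A j → Prop)
    (hne : ∀ j : Fin (m + 2), ∃ x : A j, P j x)
    (step : ∀ (i : Fin (m + 1)) (a : A i.castSucc), P i.castSucc a →
      ∃ b : A i.succ, E i a b ∧ P i.succ b) :
    ∃ a : ∀ j, A j, (∀ i : Fin (m + 1), E i (a i.castSucc) (a i.succ)) ∧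
      ∀ j, P j (a j) := by
  have key : ∀ k : ℕ, k ≤ m + 1 → ∃ a : ∀ j, A j,
      (∀ i : Fin (m + 1), (i : ℕ) < k → E i (a i.castSucc) (a i.succ)) ∧
      (∀ j, P j (a j)) := by
    intro k
    induction k with
    | zero =>
      intro _
      exact ⟨fun j => (hne j).choose, fun i hi => absurd hi (by omega),
        fun j => (hne j).choose_spec⟩
    | succ k ih =>
      intro hk
      obtain ⟨a, hedge, hP⟩ := ih (by omega)
      set i : Fin (m + 1) := ⟨k, by omega⟩ with hidef
      obtain ⟨b, hEb, hPb⟩ := step i (a i.castSucc) (hP i.castSucc)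
      refine ⟨Function.update a i.succ b, ?_, ?_⟩
      · intro i' hi'
        rcases lt_or_eq_of_le (Nat.lt_succ_iff.1 hi') with hlt | heq
        · have h1 : i'.castSucc ≠ i.succ := by
            intro hcon
            have := congrArg Fin.val hcon
            simp [Fin.val_succ] at this
            have h5 : (i.succ : ℕ) = k + 1 := rfl
            have h7 : (i'.castSucc : ℕ) = i' := rfl
            omega
          have h2 : i'.succ ≠ i.succ := by
            intro hcon
            have := congrArg Fin.val hcon
            simp [Fin.val_succ] at this
            have h5 : (i.succ : ℕ) = k + 1 := rfl
            have h7 : (i'.succ : ℕ) = i' + 1 := rfl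
            have h8 : (i'.succ : ℕ) = (i.succ : ℕ) := congrArg Fin.val hcon
            omega
          rw [Function.update_of_ne h1, Function.update_of_ne h2]
          exact hedge i' hlt
        · have hi : i' = i := Fin.ext heq
          have h1 : i.castSucc ≠ i.succ := by
            intro hcon
            have := congrArg Fin.val hcon
            simp [Fin.val_succ] at this
          rw [hi, Function.update_of_ne h1, Function.update_self]
          exact hEb
      · intro j
        rcases eq_or_ne j i.succ with hj | hj
        · subst hj
          rw [Function.update_self]
          exact hPb
        · rw [Function.update_of_ne hj]
          exact hP j
  obtain ⟨a, hedge, hP⟩ := key (m + 1) le_rfl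
  exact ⟨a, fun i => hedge i i.isLt, hP⟩

/-- Survival of the cancellation map for spread weight functions. -/
lemma survive {g : (Σ i : Fin (m + 1), (A i.castSucc ⊕ A i.succ)) → ℝ}
    (hg : ∀ w, 0 ≤ g w) (hsum : ∑ w, g w = 1)
    (hspread : ∀ w, 0 < comb g (mu w) → 0 < g w)
    {F : Finset (Σ j : Fin (m + 2), A j)}
    (hF : F ∈ (pathComplex (m + 1) A E).faces)
    (hsupp : ∀ v, comb g v ≠ 0 → v ∈ F) :
    ∃ w, 0 < UU E g w := by
  by_contra hdead
  push_neg at hdead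
  have hg_le : ∀ w, g w ≤ SS E g w := by
    intro w
    have h1 : ¬ (0 < UU E g w) := not_lt.2 (hdead w)
    rw [UU_pos_iff] at h1
    exact not_lt.1 h1
  have hstep_pos : ∀ w, 0 < g w → ∃ w', conf E w w' ∧ 0 < g w' := by
    intro w hw
    have : 0 < SS E g w := lt_of_lt_of_le hw (hg_le w)
    by_contra hc
    push_neg at hc
    have h2 : SS E g w ≤ 0 := Finset.sum_nonpos fun w' hw' =>
      hc w' (Finset.mem_filter.1 hw').2
    linarith
  have hup : ∀ (i : Fin (m + 1)) (x : A i.castSucc), 0 < comb g ⟨i.castSucc, x⟩ →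
      ∃ y : A i.succ, E i x y ∧ 0 < comb g ⟨i.succ, y⟩ := by
    intro i x hx
    have hw : 0 < g ⟨i, Sum.inl x⟩ := hspread _ hx
    obtain ⟨w', hconf, hw'⟩ := hstep_pos _ hw
    obtain ⟨i1, a1, b1, hE1, hcase | hcase⟩ := hconf
    · obtain ⟨hwa, rfl⟩ := hcase
      obtain ⟨h1, h2⟩ := Sigma.mk.inj_iff.mp hwa
      subst h1
      have hxa : x = a1 := Sum.inl.inj (eq_of_heq h2)
      refine ⟨b1, by rw [hxa]; exact hE1, ?_⟩
      exact lt_of_lt_of_le hw' (self_le_comb hg ⟨i, Sum.inr b1⟩)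
    · obtain ⟨hwa, rfl⟩ := hcase
      obtain ⟨h1, h2⟩ := Sigma.mk.inj_iff.mp hwa
      subst h1
      exact absurd (eq_of_heq h2) (by simp)
  have hdown : ∀ (i : Fin (m + 1)) (y : A i.succ), 0 < comb g ⟨i.succ, y⟩ →
      ∃ x : A i.castSucc, 0 < comb g ⟨i.castSucc, x⟩ := by
    intro i y hy
    have hw : 0 < g ⟨i, Sum.inr y⟩ := hspread _ hy
    obtain ⟨w', hconf, hw'⟩ := hstep_pos _ hw
    obtain ⟨i1, a1, b1, hE1, hcase | hcase⟩ := hconf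
    · obtain ⟨hwa, rfl⟩ := hcase
      obtain ⟨h1, h2⟩ := Sigma.mk.inj_iff.mp hwa
      subst h1
      exact absurd (eq_of_heq h2) (by simp)
    · obtain ⟨hwa, rfl⟩ := hcase
      obtain ⟨h1, h2⟩ := Sigma.mk.inj_iff.mp hwa
      subst h1
      exact ⟨a1, lt_of_lt_of_le hw' (self_le_comb hg ⟨i, Sum.inl a1⟩)⟩
  have hex : ∃ w0, 0 < g w0 := by
    by_contra hc
    push_neg at hc
    have : ∑ w, g w ≤ 0 := Finset.sum_nonpos fun w _ => hc w
    linarith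
  obtain ⟨w0, hw0⟩ := hex
  have hv0 : 0 < comb g (mu w0) := lt_of_lt_of_le hw0 (self_le_comb hg w0)
  have hzero : ∀ (k : ℕ) (hk : k < m + 2) (x : A ⟨k, hk⟩),
      0 < comb g ⟨⟨k, hk⟩, x⟩ →
      ∃ y : A (⟨0, by omega⟩ : Fin (m + 2)), 0 < comb g ⟨⟨0, by omega⟩, y⟩ := by
    intro k
    induction k with
    | zero =>
      intro hk x hx
      exact ⟨x, hx⟩
    | succ k ih =>
      intro hk x hx
      obtain ⟨x', hx'⟩ := hdown ⟨k, by omega⟩ x hx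
      exact ih (by omega) x' hx'
  have hlayer : ∀ (k : ℕ) (hk : k < m + 2),
      ∃ x : A ⟨k, hk⟩, 0 < comb g ⟨⟨k, hk⟩, x⟩ := by
    intro k
    induction k with
    | zero =>
      intro hk
      exact hzero (mu w0).1.1 (mu w0).1.2 (mu w0).2 hv0
    | succ k ih =>
      intro hk
      obtain ⟨x, hx⟩ := ih (by omega)
      obtain ⟨y, _, hy⟩ := hup ⟨k, by omega⟩ x hx
      exact ⟨y, hy⟩
  obtain ⟨a, hedges, hPa⟩ := exists_path E (fun j x => 0 < comb g ⟨j, x⟩)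
    (fun j => hlayer j.1 j.2) (fun i x hx => hup i x hx)
  exact hF ⟨a, hedges, fun j => hsupp _ (ne_of_gt (hPa j))⟩

/-! ### The two maps and membership lemmas -/

/-- The normalized cancellation of a weight function on copies. -/
def rho (g : (Σ i : Fin (m + 1), (A i.castSucc ⊕ A i.succ)) → ℝ)
    (w : Σ i : Fin (m + 1), (A i.castSucc ⊕ A i.succ)) : ℝ :=
  UU E g w / ∑ w', UU E g w'

lemma comb_supp_image {h : (Σ i : Fin (m + 1), (A i.castSucc ⊕ A i.succ)) → ℝ}
    (h0 : ∀ w, 0 ≤ h w) {F : Finset (Σ i : Fin (m + 1), (A i.castSucc ⊕ A i.succ))}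
    (hsupp : ∀ w, h w ≠ 0 → w ∈ F) :
    ∀ v, comb h v ≠ 0 → v ∈ F.image mu := by
  intro v hv
  obtain ⟨w, hwmu, hwne⟩ := comb_pos_of_ne h0 hv
  exact hwmu ▸ Finset.mem_image_of_mem mu (hsupp w hwne)

lemma phi_mem {h} (hh : h ∈ (SComplex.bigJoin fun i => bipIndep (E i)).realization) :
    comb h ∈ (pathComplex (m + 1) A E).realization := by
  obtain ⟨h0, h1, F, hF, hsupp⟩ := hh
  exact ⟨comb_nonneg h0, by rw [sum_comb]; exact h1, F.image mu, image_face E hF,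
    comb_supp_image h0 hsupp⟩

lemma rho_mem {g} (hg0 : ∀ w, 0 ≤ g w) (hpos : 0 < ∑ w, UU E g w) :
    rho E g ∈ (SComplex.bigJoin fun i => bipIndep (E i)).realization := by
  refine ⟨fun w => div_nonneg (UU_nonneg E g w) hpos.le, ?_,
    Finset.univ.filter (fun w => UU E g w ≠ 0), UU_supp_face E hg0, ?_⟩
  · simp only [rho]
    rw [← Finset.sum_div, div_self (ne_of_gt hpos)]
  · intro w hw
    rw [Finset.mem_filter]
    refine ⟨Finset.mem_univ _, ?_⟩
    intro h0
    apply hw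
    simp only [rho]
    rw [h0, zero_div]

lemma tot_pos_spl {f} (hf : f ∈ (pathComplex (m + 1) A E).realization) :
    0 < ∑ w, UU E (spl f) w := by
  obtain ⟨h0, h1, F, hF, hsupp⟩ := hf
  obtain ⟨w, hw⟩ := survive E (spl_nonneg h0) (by rw [sum_spl]; exact h1)
    (fun w hcw => spl_pos (by rwa [comb_spl] at hcw)) hF
    (fun v hv => hsupp v (by rwa [comb_spl] at hv))
  exact Finset.sum_pos' (fun w' _ => UU_nonneg E _ w') ⟨w, Finset.mem_univ w, hw⟩

lemma psi_mem {f} (hf : f ∈ (pathComplex (m + 1) A E).realization) :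
    rho E (spl f) ∈ (SComplex.bigJoin fun i => bipIndep (E i)).realization :=
  rho_mem E (spl_nonneg hf.1) (tot_pos_spl E hf)

/-! ### The homotopy mixes -/

/-- The mixed weight used in the homotopy on the join side. -/
def gmix (h : (Σ i : Fin (m + 1), (A i.castSucc ⊕ A i.succ)) → ℝ) (t : ℝ)
    (w : Σ i : Fin (m + 1), (A i.castSucc ⊕ A i.succ)) : ℝ :=
  (1 - t) * spl (comb h) w + t * h w

lemma gmix_nonneg {h : (Σ i : Fin (m + 1), (A i.castSucc ⊕ A i.succ)) → ℝ}
    (h0 : ∀ w, 0 ≤ h w) {t : ℝ} (ht0 : 0 ≤ t) (ht1 : t ≤ 1) (w) :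
    0 ≤ gmix h t w :=
  add_nonneg (mul_nonneg (by linarith) (spl_nonneg (comb_nonneg h0) w))
    (mul_nonneg ht0 (h0 w))

lemma comb_gmix (h) (t : ℝ) (v) : comb (A := A) (gmix h t) v = comb h v := by
  unfold comb gmix
  rw [Finset.sum_add_distrib, ← Finset.mul_sum, ← Finset.mul_sum]
  have e1 : (∑ w ∈ Finset.univ.filter (fun w => mu w = v), spl (comb h) w) = comb h v :=
    comb_spl (comb h) v
  have e2 : (∑ w ∈ Finset.univ.filter (fun w => mu (A := A) w = v), h w) = comb h v := rfl
  rw [e1, e2]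
  ring

lemma sum_gmix {h : (Σ i : Fin (m + 1), (A i.castSucc ⊕ A i.succ)) → ℝ}
    (h1 : ∑ w, h w = 1) (t : ℝ) : ∑ w, gmix h t w = 1 := by
  unfold gmix
  rw [Finset.sum_add_distrib, ← Finset.mul_sum, ← Finset.mul_sum, sum_spl, sum_comb, h1]
  ring

lemma gmix_one {h : (Σ i : Fin (m + 1), (A i.castSucc ⊕ A i.succ)) → ℝ} :
    gmix h 1 = h := by
  funext w
  unfold gmix
  ring

lemma gmix_zero {h : (Σ i : Fin (m + 1), (A i.castSucc ⊕ A i.succ)) → ℝ} :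
    gmix h 0 = spl (comb h) := by
  funext w
  unfold gmix
  ring

lemma tot_pos_gmix {h} (hh : h ∈ (SComplex.bigJoin fun i => bipIndep (E i)).realization)
    {t : ℝ} (ht0 : 0 ≤ t) (ht1 : t ≤ 1) :
    0 < ∑ w, UU E (gmix h t) w := by
  obtain ⟨h0, h1, F, hF, hsupp⟩ := hh
  rcases eq_or_lt_of_le ht1 with rfl | htlt
  · rw [gmix_one, UU_eq_self E h0 hF hsupp, h1]
    norm_num
  · have hg0 : ∀ w, 0 ≤ gmix h t w := gmix_nonneg h0 ht0 ht1
    have hspread : ∀ w, 0 < comb (gmix h t) (mu w) → 0 < gmix h t w := by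
      intro w hcw
      rw [comb_gmix] at hcw
      have hs : 0 < spl (comb h) w := spl_pos hcw
      have h2 := mul_nonneg ht0 (h0 w)
      have h3 : 0 < (1 - t) * spl (comb h) w := mul_pos (by linarith) hs
      show 0 < (1 - t) * spl (comb h) w + t * h w
      linarith
    obtain ⟨w, hw⟩ := survive E hg0 (sum_gmix h1 t) hspread (image_face E hF)
      (fun v hv => comb_supp_image h0 hsupp v (by rwa [comb_gmix] at hv))
    exact Finset.sum_pos' (fun w' _ => UU_nonneg E _ w') ⟨w, Finset.mem_univ w, hw⟩

lemma gmix_mem {h} (hh : h ∈ (SComplex.bigJoin fun i => bipIndep (E i)).realization)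
    {t : ℝ} (ht0 : 0 ≤ t) (ht1 : t ≤ 1) :
    rho E (gmix h t) ∈ (SComplex.bigJoin fun i => bipIndep (E i)).realization :=
  rho_mem E (gmix_nonneg hh.1 ht0 ht1) (tot_pos_gmix E hh ht0 ht1)

/-- The value of the homotopy on the path-complex side. -/
def fmix (f : (Σ j : Fin (m + 2), A j) → ℝ) (ψ : (Σ j : Fin (m + 2), A j) → ℝ)
    (t : ℝ) (v : Σ j : Fin (m + 2), A j) : ℝ :=
  (1 - t) * ψ v + t * f v

lemma rho_spl_nonneg {f} (hf : f ∈ (pathComplex (m + 1) A E).realization) (w) :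
    0 ≤ rho E (spl f) w :=
  div_nonneg (UU_nonneg E _ w) (tot_pos_spl E hf).le

lemma sum_rho {g} (hpos : 0 < ∑ w, UU E g w) : ∑ w, rho E g w = 1 := by
  simp only [rho]
  rw [← Finset.sum_div, div_self (ne_of_gt hpos)]

lemma rho_supp {g w} (h : rho E g w ≠ 0) : UU E g w ≠ 0 := by
  intro h0
  exact h (by simp only [rho]; rw [h0, zero_div])

lemma fmix_mem {f} (hf : f ∈ (pathComplex (m + 1) A E).realization)
    {t : ℝ} (ht0 : 0 ≤ t) (ht1 : t ≤ 1) :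
    fmix f (comb (rho E (spl f))) t ∈ (pathComplex (m + 1) A E).realization := by
  obtain ⟨h0, h1, F, hF, hsupp⟩ := hf
  have hf' : f ∈ (pathComplex (m + 1) A E).realization := ⟨h0, h1, F, hF, hsupp⟩
  have hr0 : ∀ w, 0 ≤ rho E (spl f) w := rho_spl_nonneg E hf'
  refine ⟨?_, ?_, F, hF, ?_⟩
  · intro v
    exact add_nonneg (mul_nonneg (by linarith) (comb_nonneg hr0 v))
      (mul_nonneg ht0 (h0 v))
  · unfold fmix
    rw [Finset.sum_add_distrib, ← Finset.mul_sum, ← Finset.mul_sum, sum_comb,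
      sum_rho E (tot_pos_spl E hf'), h1]
    ring
  · intro v hv
    have : comb (rho E (spl f)) v ≠ 0 ∨ f v ≠ 0 := by
      by_contra hc
      push_neg at hc
      apply hv
      unfold fmix
      rw [hc.1, hc.2]
      ring
    rcases this with hc | hc
    · obtain ⟨w, hwmu, hwne⟩ := comb_pos_of_ne hr0 hc
      have hU : UU E (spl f) w ≠ 0 := rho_supp E hwne
      have hsplw : spl f w ≠ 0 := by
        intro h0'
        apply hU
        have := UU_le E (spl_nonneg h0) w
        have := UU_nonneg E (spl f) w
        rw [h0'] at *
        linarith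
      have : f (mu w) ≠ 0 := by
        intro h0'
        apply hsplw
        unfold spl
        rw [h0', zero_div]
      exact hsupp v (by rwa [hwmu] at this)
    · exact hsupp v hc

/-! ### Endpoint identities -/

lemma rho_eq_self {h} (hh : h ∈ (SComplex.bigJoin fun i => bipIndep (E i)).realization) :
    rho E h = h := by
  obtain ⟨h0, h1, F, hF, hsupp⟩ := hh
  funext w
  simp only [rho]
  rw [UU_eq_self E h0 hF hsupp, h1, div_one]

lemma fmix_zero (f ψ : (Σ j : Fin (m + 2), A j) → ℝ) : fmix f ψ 0 = ψ := by
  funext v; unfold fmix; ring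

lemma fmix_one (f ψ : (Σ j : Fin (m + 2), A j) → ℝ) : fmix f ψ 1 = f := by
  funext v; unfold fmix; ring

/-! ### Continuity -/

lemma cont_comb : Continuous (comb (A := A)) := by
  apply continuous_pi
  intro v
  exact continuous_finset_sum _ fun w _ => continuous_apply w

lemma cont_spl : Continuous (spl (A := A)) := by
  apply continuous_pi
  intro w
  exact (continuous_apply (mu w)).div_const _

lemma cont_UU : Continuous (UU (A := A) E) := by
  apply continuous_pi
  intro w
  show Continuous fun g => max (g w - SS E g w) 0
  refine Continuous.max ?_ continuous_const
  exact (continuous_apply w).sub (continuous_finset_sum _ fun w' _ => continuous_apply w')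

/-! ### The continuous maps -/

noncomputable def psiMap :
    C(↥((pathComplex (m + 1) A E).realization),
      ↥((SComplex.bigJoin fun i : Fin (m + 1) => bipIndep (E i)).realization)) where
  toFun f := ⟨rho E (spl f.1), psi_mem E f.2⟩
  continuous_toFun := by
    apply Continuous.subtype_mk
    have hU : Continuous fun f : ↥((pathComplex (m + 1) A E).realization) =>
        UU E (spl f.1) :=
      (cont_UU E).comp ((cont_spl (A := A)).comp continuous_subtype_val)
    have hden : Continuous fun f : ↥((pathComplex (m + 1) A E).realization) =>
        ∑ w', UU E (spl f.1) w' :=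
      continuous_finset_sum _ fun w' _ => (continuous_apply w').comp hU
    apply continuous_pi
    intro w
    exact ((continuous_apply w).comp hU).div hden fun f => ne_of_gt (tot_pos_spl E f.2)

noncomputable def phiMap :
    C(↥((SComplex.bigJoin fun i : Fin (m + 1) => bipIndep (E i)).realization),
      ↥((pathComplex (m + 1) A E).realization)) where
  toFun h := ⟨comb h.1, phi_mem E h.2⟩
  continuous_toFun :=
    Continuous.subtype_mk ((cont_comb (A := A)).comp continuous_subtype_val) _

/-! ### The homotopies -/

noncomputable def leftHomotopy :
    ContinuousMap.Homotopy ((psiMap E).comp (phiMap E))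
      (ContinuousMap.id ↥((SComplex.bigJoin fun i : Fin (m + 1) => bipIndep (E i)).realization)) where
  toFun p := ⟨rho E (gmix p.2.1 (p.1 : ℝ)), gmix_mem E p.2.2 p.1.2.1 p.1.2.2⟩
  continuous_toFun := by
    apply Continuous.subtype_mk
    have ht : Continuous fun p : ↥unitInterval ×
        ↥((SComplex.bigJoin fun i : Fin (m + 1) => bipIndep (E i)).realization) =>
        (p.1 : ℝ) := continuous_subtype_val.comp continuous_fst
    have hh : Continuous fun p : ↥unitInterval ×
        ↥((SComplex.bigJoin fun i : Fin (m + 1) => bipIndep (E i)).realization) =>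
        p.2.1 := continuous_subtype_val.comp continuous_snd
    have hgm : Continuous fun p : ↥unitInterval ×
        ↥((SComplex.bigJoin fun i : Fin (m + 1) => bipIndep (E i)).realization) =>
        gmix p.2.1 (p.1 : ℝ) := by
      apply continuous_pi
      intro w
      show Continuous fun p : ↥unitInterval ×
          ↥((SComplex.bigJoin fun i : Fin (m + 1) => bipIndep (E i)).realization) =>
          (1 - (p.1 : ℝ)) * spl (comb p.2.1) w + (p.1 : ℝ) * p.2.1 w
      have h1 : Continuous fun p : ↥unitInterval ×
          ↥((SComplex.bigJoin fun i : Fin (m + 1) => bipIndep (E i)).realization) =>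
          spl (comb p.2.1) w :=
        (continuous_apply w).comp ((cont_spl (A := A)).comp ((cont_comb (A := A)).comp hh))
      exact ((continuous_const.sub ht).mul h1).add (ht.mul ((continuous_apply w).comp hh))
    have hU : Continuous fun p : ↥unitInterval ×
        ↥((SComplex.bigJoin fun i : Fin (m + 1) => bipIndep (E i)).realization) =>
        UU E (gmix p.2.1 (p.1 : ℝ)) := (cont_UU E).comp hgm
    have hden : Continuous fun p : ↥unitInterval ×
        ↥((SComplex.bigJoin fun i : Fin (m + 1) => bipIndep (E i)).realization) =>
        ∑ w', UU E (gmix p.2.1 (p.1 : ℝ)) w' :=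
      continuous_finset_sum _ fun w' _ => (continuous_apply w').comp hU
    apply continuous_pi
    intro w
    exact ((continuous_apply w).comp hU).div hden
      fun p => ne_of_gt (tot_pos_gmix E p.2.2 p.1.2.1 p.1.2.2)
  map_zero_left h := by
    apply Subtype.ext
    show rho E (gmix h.1 ((0 : unitInterval) : ℝ)) = rho E (spl (comb h.1))
    rw [show ((0 : unitInterval) : ℝ) = 0 from rfl, gmix_zero]
  map_one_left h := by
    apply Subtype.ext
    show rho E (gmix h.1 ((1 : unitInterval) : ℝ)) = h.1
    rw [show ((1 : unitInterval) : ℝ) = 1 from rfl, gmix_one]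
    exact rho_eq_self E h.2

noncomputable def rightHomotopy :
    ContinuousMap.Homotopy ((phiMap E).comp (psiMap E))
      (ContinuousMap.id ↥((pathComplex (m + 1) A E).realization)) where
  toFun p := ⟨fmix p.2.1 (comb (rho E (spl p.2.1))) (p.1 : ℝ),
    fmix_mem E p.2.2 p.1.2.1 p.1.2.2⟩
  continuous_toFun := by
    apply Continuous.subtype_mk
    have ht : Continuous fun p : ↥unitInterval ×
        ↥((pathComplex (m + 1) A E).realization) => (p.1 : ℝ) :=
      continuous_subtype_val.comp continuous_fst
    have hf : Continuous fun p : ↥unitInterval ×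
        ↥((pathComplex (m + 1) A E).realization) => p.2.1 :=
      continuous_subtype_val.comp continuous_snd
    have hU : Continuous fun p : ↥unitInterval ×
        ↥((pathComplex (m + 1) A E).realization) => UU E (spl p.2.1) :=
      (cont_UU E).comp ((cont_spl (A := A)).comp hf)
    have hden : Continuous fun p : ↥unitInterval ×
        ↥((pathComplex (m + 1) A E).realization) => ∑ w', UU E (spl p.2.1) w' :=
      continuous_finset_sum _ fun w' _ => (continuous_apply w').comp hU
    have hrho : Continuous fun p : ↥unitInterval ×
        ↥((pathComplex (m + 1) A E).realization) => rho E (spl p.2.1) := by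
      apply continuous_pi
      intro w
      exact ((continuous_apply w).comp hU).div hden
        fun p => ne_of_gt (tot_pos_spl E p.2.2)
    apply continuous_pi
    intro v
    show Continuous fun p : ↥unitInterval ×
        ↥((pathComplex (m + 1) A E).realization) =>
        (1 - (p.1 : ℝ)) * comb (rho E (spl p.2.1)) v + (p.1 : ℝ) * p.2.1 v
    have h1 : Continuous fun p : ↥unitInterval ×
        ↥((pathComplex (m + 1) A E).realization) => comb (rho E (spl p.2.1)) v :=
      (continuous_apply v).comp ((cont_comb (A := A)).comp hrho)
    exact ((continuous_const.sub ht).mul h1).add (ht.mul ((continuous_apply v).comp hf))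
  map_zero_left f := by
    apply Subtype.ext
    show fmix f.1 (comb (rho E (spl f.1))) ((0 : unitInterval) : ℝ) = comb (rho E (spl f.1))
    rw [show ((0 : unitInterval) : ℝ) = 0 from rfl, fmix_zero]
  map_one_left f := by
    apply Subtype.ext
    show fmix f.1 (comb (rho E (spl f.1))) ((1 : unitInterval) : ℝ) = f.1
    rw [show ((1 : unitInterval) : ℝ) = 1 from rfl, fmix_one]

/-- The main homotopy equivalence, for `n = m + 1 ≥ 1`. -/
noncomputable def mainEquiv :
    ContinuousMap.HomotopyEquiv ↥((pathComplex (m + 1) A E).realization)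
      ↥((SComplex.bigJoin fun i : Fin (m + 1) => bipIndep (E i)).realization) where
  toFun := psiMap E
  invFun := phiMap E
  left_inv := ⟨rightHomotopy E⟩
  right_inv := ⟨leftHomotopy E⟩

/-! ### The degenerate case `n = 0` -/

lemma continuous_of_empty {X Y : Type*} [TopologicalSpace X] [TopologicalSpace Y]
    [IsEmpty X] (f : X → Y) : Continuous f := by
  rw [continuous_def]
  intro s _
  rw [Set.eq_empty_of_isEmpty (f ⁻¹' s)]
  exact isOpen_empty

noncomputable def emptyHomotopyEquiv (X Y : Type*) [TopologicalSpace X] [TopologicalSpace Y]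
    [IsEmpty X] [IsEmpty Y] : ContinuousMap.HomotopyEquiv X Y where
  toFun := ⟨fun x => isEmptyElim x, continuous_of_empty _⟩
  invFun := ⟨fun y => isEmptyElim y, continuous_of_empty _⟩
  left_inv := by
    haveI : IsEmpty (↥unitInterval × X) := ⟨fun p => IsEmpty.false p.2⟩
    exact ⟨{ toFun := fun p => isEmptyElim p,
             continuous_toFun := continuous_of_empty _,
             map_zero_left := fun x => isEmptyElim x,
             map_one_left := fun x => isEmptyElim x }⟩
  right_inv := by
    haveI : IsEmpty (↥unitInterval × Y) := ⟨fun p => IsEmpty.false p.2⟩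
    exact ⟨{ toFun := fun p => isEmptyElim p,
             continuous_toFun := continuous_of_empty _,
             map_zero_left := fun y => isEmptyElim y,
             map_one_left := fun y => isEmptyElim y }⟩

lemma empty_case (A : Fin 1 → Type u) [∀ i, Fintype (A i)]
    (E : ∀ i : Fin 0, A i.castSucc → A i.succ → Prop) :
    SComplex.HEquiv (pathComplex 0 A E)
      (SComplex.bigJoin fun i : Fin 0 => bipIndep (E i)) := by
  have hX : IsEmpty ↥((pathComplex 0 A E).realization) := by
    constructor
    rintro ⟨f, h0, h1, F, hF, hsupp⟩
    have hz : ∀ v : Σ j : Fin 1, A j, f v = 0 := by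
      rintro ⟨j, x⟩
      by_contra hne
      apply hF
      obtain rfl : j = 0 := Subsingleton.elim _ _
      refine ⟨fun i => (Subsingleton.elim (0 : Fin 1) i) ▸ x, fun i => i.elim0, ?_⟩
      intro i
      obtain rfl : (0 : Fin 1) = i := Subsingleton.elim _ _
      exact hsupp ⟨0, x⟩ hne
    rw [Finset.sum_eq_zero (fun v _ => hz v)] at h1
    exact absurd h1 (by norm_num)
  have hJ : IsEmpty
      ↥((SComplex.bigJoin fun i : Fin 0 => bipIndep (E i)).realization) := by
    constructor
    rintro ⟨f, h0, h1, -⟩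
    haveI : IsEmpty (Σ i : Fin 0, (A i.castSucc ⊕ A i.succ)) := ⟨fun p => p.1.elim0⟩
    rw [Finset.univ_eq_empty, Finset.sum_empty] at h1
    exact absurd h1 (by norm_num)
  exact ⟨emptyHomotopyEquiv _ _⟩

end Statement5
/-- Let `G` be a layered graph on `A₀ ∪ A₁ ∪ ⋯ ∪ Aₙ`, each
edge joining `A_{i-1}` to `A_i`; let `Xᵢ` be the independence complex of the
bipartite graph between `A_{i-1}` and `Aᵢ`, and let `X` be the complex whose
Stanley–Reisner ideal is generated by the full edge paths.  Then `X` is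
homotopy equivalent to the join `X₁ * X₂ * ⋯ * Xₙ`. -/
theorem statement_5 (n : ℕ) (A : Fin (n + 1) → Type u) [∀ i, Fintype (A i)]
    (E : ∀ i : Fin n, A i.castSucc → A i.succ → Prop) :
    SComplex.HEquiv (pathComplex n A E)
      (SComplex.bigJoin fun i : Fin n => bipIndep (E i)) := by
  cases n with
  | zero => exact Statement5.empty_case A E
  | succ m => exact ⟨Statement5.mainEquiv E⟩

end
end
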